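/- arXiv:1608.02695 — 2 statements merged into one kernel-verified Lean document; each statement's English description precedes it below -/
import Mathlib

section
/- If 1/2 < C_1 ≤ C_2 and ρ_{12} = 0, then P̄_cor^opt(C_1) = ρ_{11}C_1 + ρ_{22}C_2, and P_I(C_1) = [0, ρ_{11}] when C_1 < C_2 while P_I(C_1) = [0, 1] when C_1 = C_2; consequently q_0^{(0)} = C_1. -/
open Matrix ComplexOrder

noncomputable section

namespace FRIR

/-- A three-outcome POVM on a qubit: `M₀` is the inconclusive outcome. -/
def IsPOVM (M₀ M₁ M₂ : Matrix (Fin 2) (Fin 2) ℂ) : Prop :=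
  M₀.PosSemidef ∧ M₁.PosSemidef ∧ M₂.PosSemidef ∧ M₀ + M₁ + M₂ = 1

/-- `ρ₀ = q₁ρ₁ + q₂ρ₂`. -/
def rho0 (q₁ q₂ : ℝ) (ρ₁ ρ₂ : Matrix (Fin 2) (Fin 2) ℂ) : Matrix (Fin 2) (Fin 2) ℂ :=
  (q₁ : ℂ) • ρ₁ + (q₂ : ℂ) • ρ₂

/-- The probability of the inconclusive result, `P_I = tr(ρ₀M₀)`. -/
def PIof (q₁ q₂ : ℝ) (ρ₁ ρ₂ M₀ : Matrix (Fin 2) (Fin 2) ℂ) : ℝ :=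
  (Matrix.trace (rho0 q₁ q₂ ρ₁ ρ₂ * M₀)).re

/-- `P_cor = q₁tr(ρ₁M₁) + q₂tr(ρ₂M₂)`. -/
def Pcor (q₁ q₂ : ℝ) (ρ₁ ρ₂ M₁ M₂ : Matrix (Fin 2) (Fin 2) ℂ) : ℝ :=
  q₁ * (Matrix.trace (ρ₁ * M₁)).re + q₂ * (Matrix.trace (ρ₂ * M₂)).re

/-- `P̄_cor = q·tr(ρ₀M₀) + q₁tr(ρ₁M₁) + q₂tr(ρ₂M₂)`. -/
def PbarCor (q q₁ q₂ : ℝ) (ρ₁ ρ₂ M₀ M₁ M₂ : Matrix (Fin 2) (Fin 2) ℂ) : ℝ :=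
  q * PIof q₁ q₂ ρ₁ ρ₂ M₀ + Pcor q₁ q₂ ρ₁ ρ₂ M₁ M₂

/-- `P̄_cor^opt(q)`: the maximal value of `P̄_cor` over all POVMs. -/
def PbarOpt (q q₁ q₂ : ℝ) (ρ₁ ρ₂ : Matrix (Fin 2) (Fin 2) ℂ) : ℝ :=
  sSup {x : ℝ | ∃ M₀ M₁ M₂, IsPOVM M₀ M₁ M₂ ∧ PbarCor q q₁ q₂ ρ₁ ρ₂ M₀ M₁ M₂ = x}

/-- `P_cor^opt(Q)`: the maximal value of `P_cor` over POVMs with `P_I = Q`. -/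
def PcorOpt (Q q₁ q₂ : ℝ) (ρ₁ ρ₂ : Matrix (Fin 2) (Fin 2) ℂ) : ℝ :=
  sSup {x : ℝ | ∃ M₀ M₁ M₂, IsPOVM M₀ M₁ M₂ ∧
    PIof q₁ q₂ ρ₁ ρ₂ M₀ = Q ∧ Pcor q₁ q₂ ρ₁ ρ₂ M₁ M₂ = x}

/-- `P_I(q) = { tr(ρ₀M₀) : POVMs attaining P̄_cor^opt(q) }`. -/
def PIset (q q₁ q₂ : ℝ) (ρ₁ ρ₂ : Matrix (Fin 2) (Fin 2) ℂ) : Set ℝ :=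
  {Q : ℝ | ∃ M₀ M₁ M₂, IsPOVM M₀ M₁ M₂ ∧
    PbarCor q q₁ q₂ ρ₁ ρ₂ M₀ M₁ M₂ = PbarOpt q q₁ q₂ ρ₁ ρ₂ ∧ PIof q₁ q₂ ρ₁ ρ₂ M₀ = Q}

/-- `q₀⁽⁰⁾ = sup{q > 0 : 0 ∈ P_I(q)}`. -/
def q0low (q₁ q₂ : ℝ) (ρ₁ ρ₂ : Matrix (Fin 2) (Fin 2) ℂ) : ℝ :=
  sSup {q : ℝ | 0 < q ∧ (0 : ℝ) ∈ PIset q q₁ q₂ ρ₁ ρ₂}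

/-- `q₀⁽¹⁾ = inf{q > 0 : 1 ∈ P_I(q)}`. -/
def q0high (q₁ q₂ : ℝ) (ρ₁ ρ₂ : Matrix (Fin 2) (Fin 2) ℂ) : ℝ :=
  sInf {q : ℝ | 0 < q ∧ (1 : ℝ) ∈ PIset q q₁ q₂ ρ₁ ρ₂}

lemma vmv_mul (a b : Fin 2 → ℂ) (M : Matrix (Fin 2) (Fin 2) ℂ) :
    vecMulVec a b * M = vecMulVec a (b ᵥ* M) := by
  ext i j
  simp [vecMulVec_apply, mul_apply, vecMul, dotProduct, Fin.sum_univ_two]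
  ring

lemma vmv_mul_vmv (a b c d : Fin 2 → ℂ) :
    vecMulVec a b * vecMulVec c d = (b ⬝ᵥ c) • vecMulVec a d := by
  ext i j
  simp [vecMulVec_apply, mul_apply, dotProduct, Fin.sum_univ_two]
  ring

lemma vmv_mulVec (a b x : Fin 2 → ℂ) :
    vecMulVec a b *ᵥ x = (b ⬝ᵥ x) • a := by
  ext i
  simp [vecMulVec_apply, mulVec, dotProduct, Fin.sum_univ_two]
  ring

lemma vmv_mul_mid (a b c d : Fin 2 → ℂ) (M : Matrix (Fin 2) (Fin 2) ℂ) :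
    vecMulVec a b * M * vecMulVec c d = (b ⬝ᵥ (M *ᵥ c)) • vecMulVec a d := by
  rw [vmv_mul, vmv_mul_vmv, dotProduct_mulVec]

lemma trace_vmv_mul (v w : Fin 2 → ℂ) (M : Matrix (Fin 2) (Fin 2) ℂ) :
    trace (vecMulVec v w * M) = w ⬝ᵥ (M *ᵥ v) := by
  simp [trace, mul_apply, vecMulVec_apply, dotProduct, mulVec, diag, Fin.sum_univ_two]
  ring

lemma vmv_psd (v : Fin 2 → ℂ) : (vecMulVec v (star v)).PosSemidef := by
  refine PosSemidef.of_dotProduct_mulVec_nonneg ?_ ?_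
  · ext i j
    simp [conjTranspose_apply, vecMulVec_apply, mul_comm]
  · intro x
    rw [vmv_mulVec]
    have : star x ⬝ᵥ (star v ⬝ᵥ x) • v = (star v ⬝ᵥ x) * star (star v ⬝ᵥ x) := by
      rw [dotProduct_smul, smul_eq_mul, star_dotProduct]
      ring_nf
      rw [star_star]
    rw [this]
    exact mul_star_self_nonneg _

lemma smul_psd {M : Matrix (Fin 2) (Fin 2) ℂ} (hM : M.PosSemidef) (c : ℝ) (hc : 0 ≤ c) :
    ((c : ℂ) • M).PosSemidef := by
  refine PosSemidef.of_dotProduct_mulVec_nonneg ?_ ?_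
  · have : ((c:ℂ) • M)ᴴ = star (c:ℂ) • Mᴴ := conjTranspose_smul (c:ℂ) M
    rw [Matrix.IsHermitian, this, hM.1.eq]
    simp
  · intro x
    rw [smul_mulVec, dotProduct_smul, smul_eq_mul]
    exact mul_nonneg (by exact_mod_cast Complex.zero_le_real.2 hc) (hM.dotProduct_mulVec_nonneg x)

lemma complete (ν₁ ν₂ : Fin 2 → ℂ)
    (hν₁ : star ν₁ ⬝ᵥ ν₁ = 1) (hν₂ : star ν₂ ⬝ᵥ ν₂ = 1) (hν₁₂ : star ν₁ ⬝ᵥ ν₂ = 0) :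
    vecMulVec ν₁ (star ν₁) + vecMulVec ν₂ (star ν₂) = 1 := by
  have hν₂₁ : star ν₂ ⬝ᵥ ν₁ = 0 := by
    rw [star_dotProduct, hν₁₂, star_zero]
  simp only [dotProduct, Fin.sum_univ_two, Pi.star_apply, Complex.star_def] at hν₁ hν₂ hν₁₂ hν₂₁
  set U : Matrix (Fin 2) (Fin 2) ℂ := Matrix.of (fun i k => if k = 0 then ν₁ i else ν₂ i) with hU
  have h1 : Uᴴ * U = 1 := by
    ext k l
    fin_cases k <;> fin_cases l <;>
      simp [hU, mul_apply, conjTranspose_apply, one_apply, Fin.sum_univ_two, Complex.star_def] <;>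
      first
        | linear_combination hν₁ | linear_combination hν₂
        | linear_combination hν₁₂ | linear_combination hν₂₁
  have h2 : U * Uᴴ = 1 := mul_eq_one_comm.mp h1
  rw [← h2]
  ext i j
  simp [hU, mul_apply, conjTranspose_apply, vecMulVec_apply, Fin.sum_univ_two]

set_option maxHeartbeats 1000000 in
theorem main (q₁ q₂ : ℝ) (ρ₁ ρ₂ : Matrix (Fin 2) (Fin 2) ℂ)
    (ν₁ ν₂ : Fin 2 → ℂ)
    (hν₁ : star ν₁ ⬝ᵥ ν₁ = 1) (hν₂ : star ν₂ ⬝ᵥ ν₂ = 1) (hν₁₂ : star ν₁ ⬝ᵥ ν₂ = 0)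
    (C₁ C₂ r1 r2 : ℝ) (hr1 : 0 < r1) (hr2 : 0 < r2) (hr : r1 + r2 = 1)
    (hC₁ : 1/2 < C₁) (hC12 : C₁ ≤ C₂)
    (e₁ : (q₁:ℂ) • ρ₁ = ((C₁*r1 : ℝ):ℂ) • vecMulVec ν₁ (star ν₁)
        + (((1-C₂)*r2 : ℝ):ℂ) • vecMulVec ν₂ (star ν₂))
    (e₂ : (q₂:ℂ) • ρ₂ = (((1-C₁)*r1 : ℝ):ℂ) • vecMulVec ν₁ (star ν₁)
        + ((C₂*r2 : ℝ):ℂ) • vecMulVec ν₂ (star ν₂)) :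
    PbarOpt C₁ q₁ q₂ ρ₁ ρ₂ = r1 * C₁ + r2 * C₂ ∧
      (C₁ < C₂ → PIset C₁ q₁ q₂ ρ₁ ρ₂ = Set.Icc 0 r1) ∧
      (C₁ = C₂ → PIset C₁ q₁ q₂ ρ₁ ρ₂ = Set.Icc 0 1) ∧
      q0low q₁ q₂ ρ₁ ρ₂ = C₁ := by
  have hν₂₁ : star ν₂ ⬝ᵥ ν₁ = 0 := by rw [star_dotProduct, hν₁₂, star_zero]
  set P₁ := vecMulVec ν₁ (star ν₁) with hP₁
  set P₂ := vecMulVec ν₂ (star ν₂) with hP₂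
  set mm : Matrix (Fin 2) (Fin 2) ℂ → ℝ := fun M => (star ν₁ ⬝ᵥ (M *ᵥ ν₁)).re with hmm
  set nn : Matrix (Fin 2) (Fin 2) ℂ → ℝ := fun M => (star ν₂ ⬝ᵥ (M *ᵥ ν₂)).re with hnn
  have tr_diag' : ∀ (a b : ℝ) (M : Matrix (Fin 2) (Fin 2) ℂ),
      (trace ((((a:ℝ):ℂ) • P₁ + ((b:ℝ):ℂ) • P₂) * M)).re = a * mm M + b * nn M := by
    intro a b M
    rw [add_mul, smul_mul_assoc, smul_mul_assoc, trace_add, trace_smul, trace_smul,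
      hP₁, hP₂, trace_vmv_mul, trace_vmv_mul]
    simp [hmm, hnn, smul_eq_mul, Complex.add_re, Complex.re_ofReal_mul]
  have hrho0 : rho0 q₁ q₂ ρ₁ ρ₂ = ((r1:ℝ):ℂ) • P₁ + ((r2:ℝ):ℂ) • P₂ := by
    rw [rho0, e₁, e₂]
    ext i j
    simp only [Matrix.add_apply, Matrix.smul_apply, smul_eq_mul]
    push_cast
    ring
  -- P_I formula
  have hPI : ∀ M, PIof q₁ q₂ ρ₁ ρ₂ M = r1 * mm M + r2 * nn M := by
    intro M
    rw [PIof, hrho0, tr_diag']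
  -- P̄_cor formula
  have hPB : ∀ (q : ℝ) (M₀ M₁ M₂ : Matrix (Fin 2) (Fin 2) ℂ),
      PbarCor q q₁ q₂ ρ₁ ρ₂ M₀ M₁ M₂ =
        r1 * (q * mm M₀ + C₁ * mm M₁ + (1-C₁) * mm M₂)
          + r2 * (q * nn M₀ + (1-C₂) * nn M₁ + C₂ * nn M₂) := by
    intro q M₀ M₁ M₂
    have h1 : q₁ * (trace (ρ₁ * M₁)).re = (C₁*r1) * mm M₁ + ((1-C₂)*r2) * nn M₁ := by
      have : ((q₁:ℂ) • ρ₁) * M₁ = (q₁:ℂ) • (ρ₁ * M₁) := smul_mul_assoc _ _ _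
      have h := tr_diag' (C₁*r1) ((1-C₂)*r2) M₁
      rw [← e₁, this, trace_smul, smul_eq_mul, Complex.re_ofReal_mul] at h
      exact h
    have h2 : q₂ * (trace (ρ₂ * M₂)).re = ((1-C₁)*r1) * mm M₂ + (C₂*r2) * nn M₂ := by
      have : ((q₂:ℂ) • ρ₂) * M₂ = (q₂:ℂ) • (ρ₂ * M₂) := smul_mul_assoc _ _ _
      have h := tr_diag' ((1-C₁)*r1) (C₂*r2) M₂
      rw [← e₂, this, trace_smul, smul_eq_mul, Complex.re_ofReal_mul] at h
      exact h
    rw [PbarCor, Pcor, h1, h2, hPI]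
    ring
  -- POVM constraints
  have hcon : ∀ M₀ M₁ M₂, IsPOVM M₀ M₁ M₂ →
      (0 ≤ mm M₀ ∧ 0 ≤ mm M₁ ∧ 0 ≤ mm M₂ ∧ 0 ≤ nn M₀ ∧ 0 ≤ nn M₁ ∧ 0 ≤ nn M₂) ∧
      mm M₀ + mm M₁ + mm M₂ = 1 ∧ nn M₀ + nn M₁ + nn M₂ = 1 := by
    intro M₀ M₁ M₂ ⟨h0, h1, h2, hsum⟩
    have key : ∀ (M : Matrix (Fin 2) (Fin 2) ℂ), M.PosSemidef → 0 ≤ mm M ∧ 0 ≤ nn M := by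
      intro M hM
      exact ⟨(Complex.le_def.mp (hM.dotProduct_mulVec_nonneg ν₁)).1, (Complex.le_def.mp (hM.dotProduct_mulVec_nonneg ν₂)).1⟩
    have sum1 : mm M₀ + mm M₁ + mm M₂ = 1 := by
      have := congrArg (fun A => (star ν₁ ⬝ᵥ (A *ᵥ ν₁)).re) hsum
      simp only [hmm, add_mulVec, dotProduct_add, one_mulVec, hν₁, Complex.add_re, Complex.one_re] at this
      exact this
    have sum2 : nn M₀ + nn M₁ + nn M₂ = 1 := by
      have := congrArg (fun A => (star ν₂ ⬝ᵥ (A *ᵥ ν₂)).re) hsum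
      simp only [hnn, add_mulVec, dotProduct_add, one_mulVec, hν₂, Complex.add_re, Complex.one_re] at this
      exact this
    exact ⟨⟨(key _ h0).1, (key _ h1).1, (key _ h2).1, (key _ h0).2, (key _ h1).2, (key _ h2).2⟩,
      sum1, sum2⟩
  -- values on explicit matrices
  have mmP₁ : mm P₁ = 1 := by
    simp only [hmm, hP₁]
    rw [vmv_mulVec, hν₁, one_smul, hν₁, Complex.one_re]
  have mmP₂ : mm P₂ = 0 := by
    simp only [hmm, hP₂]
    rw [vmv_mulVec, hν₂₁, zero_smul, dotProduct_zero, Complex.zero_re]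
  have nnP₁ : nn P₁ = 0 := by
    simp only [hnn, hP₁]
    rw [vmv_mulVec, hν₁₂, zero_smul, dotProduct_zero, Complex.zero_re]
  have nnP₂ : nn P₂ = 1 := by
    simp only [hnn, hP₂]
    rw [vmv_mulVec, hν₂, one_smul, hν₂, Complex.one_re]
  have mm0 : mm 0 = 0 := by
    simp only [hmm]
    rw [Matrix.zero_mulVec, dotProduct_zero, Complex.zero_re]
  have nn0 : nn 0 = 0 := by
    simp only [hnn]
    rw [Matrix.zero_mulVec, dotProduct_zero, Complex.zero_re]
  have mm1 : mm 1 = 1 := by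
    simp only [hmm]
    rw [one_mulVec, hν₁, Complex.one_re]
  have nn1 : nn 1 = 1 := by
    simp only [hnn]
    rw [one_mulVec, hν₂, Complex.one_re]
  have mmsmul : ∀ (t : ℝ) (M : Matrix (Fin 2) (Fin 2) ℂ), mm ((t:ℂ) • M) = t * mm M := by
    intro t M
    simp only [hmm]
    rw [smul_mulVec, dotProduct_smul, smul_eq_mul, Complex.re_ofReal_mul]
  have nnsmul : ∀ (t : ℝ) (M : Matrix (Fin 2) (Fin 2) ℂ), nn ((t:ℂ) • M) = t * nn M := by
    intro t M
    simp only [hnn]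
    rw [smul_mulVec, dotProduct_smul, smul_eq_mul, Complex.re_ofReal_mul]
  have hPP : P₁ + P₂ = 1 := complete ν₁ ν₂ hν₁ hν₂ hν₁₂
  have hP₁psd : P₁.PosSemidef := vmv_psd ν₁
  have hP₂psd : P₂.PosSemidef := vmv_psd ν₂
  have C₁pos : 0 < C₁ := by linarith
  -- upper bound
  have hub : ∀ (q : ℝ), 0 < q → ∀ M₀ M₁ M₂, IsPOVM M₀ M₁ M₂ →
      PbarCor q q₁ q₂ ρ₁ ρ₂ M₀ M₁ M₂ ≤ r1 * max q C₁ + r2 * max q C₂ := by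
    intro q hq M₀ M₁ M₂ hP
    obtain ⟨⟨a0, a1, a2, b0, b1, b2⟩, s1, s2⟩ := hcon _ _ _ hP
    rw [hPB]
    have l1 : q ≤ max q C₁ := le_max_left _ _
    have l2 : C₁ ≤ max q C₁ := le_max_right _ _
    have l3 : q ≤ max q C₂ := le_max_left _ _
    have l4 : C₂ ≤ max q C₂ := le_max_right _ _
    have A : q * mm M₀ + C₁ * mm M₁ + (1-C₁) * mm M₂ ≤ max q C₁ := by
      nlinarith [mul_nonneg (sub_nonneg.2 l1) a0, mul_nonneg (sub_nonneg.2 l2) a1,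
        mul_nonneg (by linarith : (0:ℝ) ≤ max q C₁ - (1-C₁)) a2]
    have B : q * nn M₀ + (1-C₂) * nn M₁ + C₂ * nn M₂ ≤ max q C₂ := by
      nlinarith [mul_nonneg (sub_nonneg.2 l3) b0, mul_nonneg (sub_nonneg.2 l4) b2,
        mul_nonneg (by linarith : (0:ℝ) ≤ max q C₂ - (1-C₂)) b1]
    linarith [mul_le_mul_of_nonneg_left A hr1.le, mul_le_mul_of_nonneg_left B hr2.le]
  -- witnesses
  have W1 : IsPOVM 0 P₁ P₂ := ⟨.zero, hP₁psd, hP₂psd, by rw [zero_add, hPP]⟩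
  have W2 : IsPOVM P₁ 0 P₂ := ⟨hP₁psd, .zero, hP₂psd, by rw [add_zero, hPP]⟩
  have W3 : IsPOVM 1 0 0 := ⟨.one, .zero, .zero, by rw [add_zero, add_zero]⟩
  have V1 : ∀ q, PbarCor q q₁ q₂ ρ₁ ρ₂ 0 P₁ P₂ = r1 * C₁ + r2 * C₂ := by
    intro q; rw [hPB]
    simp only [mm0, nn0, mmP₁, nnP₁, mmP₂, nnP₂]; ring
  have V2 : ∀ q, PbarCor q q₁ q₂ ρ₁ ρ₂ P₁ 0 P₂ = r1 * q + r2 * C₂ := by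
    intro q; rw [hPB]
    simp only [mm0, nn0, mmP₁, nnP₁, mmP₂, nnP₂]; ring
  have V3 : ∀ q, PbarCor q q₁ q₂ ρ₁ ρ₂ 1 0 0 = r1 * q + r2 * q := by
    intro q; rw [hPB]
    simp only [mm0, nn0, mm1, nn1]; ring
  have hbdd : ∀ q, 0 < q →
      BddAbove {x : ℝ | ∃ M₀ M₁ M₂, IsPOVM M₀ M₁ M₂ ∧ PbarCor q q₁ q₂ ρ₁ ρ₂ M₀ M₁ M₂ = x} := by
    intro q hq
    refine ⟨r1 * max q C₁ + r2 * max q C₂, ?_⟩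
    rintro x ⟨M₀, M₁, M₂, hP, rfl⟩
    exact hub q hq M₀ M₁ M₂ hP
  have hopt : ∀ q, 0 < q → PbarOpt q q₁ q₂ ρ₁ ρ₂ = r1 * max q C₁ + r2 * max q C₂ := by
    intro q hq
    rw [PbarOpt]
    apply le_antisymm
    · refine csSup_le ⟨_, ⟨0, P₁, P₂, W1, rfl⟩⟩ ?_
      rintro x ⟨M₀, M₁, M₂, hP, rfl⟩
      exact hub q hq M₀ M₁ M₂ hP
    · apply le_csSup (hbdd q hq)
      rcases le_total q C₁ with h | h
      · exact ⟨0, P₁, P₂, W1, by rw [V1, max_eq_right h, max_eq_right (h.trans hC12)]⟩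
      · rcases le_total q C₂ with h' | h'
        · exact ⟨P₁, 0, P₂, W2, by rw [V2, max_eq_left h, max_eq_right h']⟩
        · exact ⟨1, 0, 0, W3, by rw [V3, max_eq_left h, max_eq_left h']⟩
  have part1 : PbarOpt C₁ q₁ q₂ ρ₁ ρ₂ = r1 * C₁ + r2 * C₂ := by
    rw [hopt C₁ C₁pos, max_self, max_eq_right hC12]
  refine ⟨part1, ?_, ?_, ?_⟩
  · -- C₁ < C₂ : PIset = Icc 0 r1
    intro hlt
    ext Q
    simp only [PIset, Set.mem_setOf_eq, Set.mem_Icc]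
    constructor
    · rintro ⟨M₀, M₁, M₂, hP, hoptat, hPIQ⟩
      obtain ⟨⟨a0, a1, a2, b0, b1, b2⟩, s1, s2⟩ := hcon _ _ _ hP
      rw [part1, hPB] at hoptat
      rw [hPI] at hPIQ
      have key : r1*((2*C₁-1)*mm M₂) + r2*((C₂-C₁)*nn M₀) + r2*((2*C₂-1)*nn M₁) = 0 := by
        linear_combination (r1*C₁) * s1 + (r2*C₂) * s2 - hoptat
      have hn0 : nn M₀ = 0 := by
        have h1 : 0 ≤ r1*((2*C₁-1)*mm M₂) :=
          mul_nonneg hr1.le (mul_nonneg (by linarith) a2)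
        have h2 : 0 ≤ r2*((2*C₂-1)*nn M₁) :=
          mul_nonneg hr2.le (mul_nonneg (by linarith) b1)
        have h3 : 0 < r2*(C₂-C₁) := mul_pos hr2 (by linarith)
        nlinarith
      constructor
      · rw [← hPIQ]
        exact add_nonneg (mul_nonneg hr1.le a0) (mul_nonneg hr2.le b0)
      · rw [← hPIQ, hn0]
        nlinarith [mul_nonneg hr1.le a1, mul_nonneg hr1.le a2]
    · rintro ⟨hQ0, hQr⟩
      have ht0 : 0 ≤ Q/r1 := div_nonneg hQ0 hr1.le
      have ht1 : Q/r1 ≤ 1 := by rw [div_le_one hr1]; exact hQr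
      have hsum : ((Q/r1 : ℝ) : ℂ) • P₁ + ((1-Q/r1 : ℝ) : ℂ) • P₁ + P₂ = 1 := by
        rw [← add_smul]
        have : ((Q/r1 : ℝ) : ℂ) + ((1-Q/r1 : ℝ) : ℂ) = 1 := by push_cast; ring
        rw [this, one_smul, hPP]
      refine ⟨((Q/r1 : ℝ) : ℂ) • P₁, ((1-Q/r1 : ℝ) : ℂ) • P₁, P₂,
        ⟨smul_psd hP₁psd _ ht0, smul_psd hP₁psd _ (by linarith), hP₂psd, hsum⟩, ?_, ?_⟩
      · rw [part1, hPB]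
        simp only [mmsmul, nnsmul, mmP₁, nnP₁, mmP₂, nnP₂]
        ring
      · rw [hPI]
        simp only [mmsmul, nnsmul, mmP₁, nnP₁]
        field_simp
        ring
  · -- C₁ = C₂ : PIset = Icc 0 1
    intro hEq
    subst hEq
    ext Q
    simp only [PIset, Set.mem_setOf_eq, Set.mem_Icc]
    constructor
    · rintro ⟨M₀, M₁, M₂, hP, hoptat, hPIQ⟩
      obtain ⟨⟨a0, a1, a2, b0, b1, b2⟩, s1, s2⟩ := hcon _ _ _ hP
      rw [hPI] at hPIQ
      constructor
      · rw [← hPIQ]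
        exact add_nonneg (mul_nonneg hr1.le a0) (mul_nonneg hr2.le b0)
      · rw [← hPIQ]
        nlinarith [mul_nonneg hr1.le a1, mul_nonneg hr1.le a2,
          mul_nonneg hr2.le b1, mul_nonneg hr2.le b2]
    · rintro ⟨hQ0, hQ1⟩
      have hsum : ((Q : ℝ) : ℂ) • (1 : Matrix (Fin 2) (Fin 2) ℂ)
          + ((1-Q : ℝ) : ℂ) • P₁ + ((1-Q : ℝ) : ℂ) • P₂ = 1 := by
        rw [add_assoc, ← smul_add, hPP, ← add_smul]
        have : ((Q : ℝ) : ℂ) + ((1-Q : ℝ) : ℂ) = 1 := by push_cast; ring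
        rw [this, one_smul]
      refine ⟨((Q : ℝ) : ℂ) • 1, ((1-Q : ℝ) : ℂ) • P₁, ((1-Q : ℝ) : ℂ) • P₂,
        ⟨smul_psd .one _ hQ0, smul_psd hP₁psd _ (by linarith), smul_psd hP₂psd _ (by linarith),
          hsum⟩, ?_, ?_⟩
      · rw [part1, hPB]
        simp only [mmsmul, nnsmul, mmP₁, nnP₁, mmP₂, nnP₂, mm1, nn1]
        ring
      · rw [hPI]
        simp only [mmsmul, nnsmul, mm1, nn1]
        linear_combination Q * hr
  · -- q0low = C₁
    have hset : {q : ℝ | 0 < q ∧ (0:ℝ) ∈ PIset q q₁ q₂ ρ₁ ρ₂} = Set.Ioc 0 C₁ := by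
      ext q
      simp only [Set.mem_setOf_eq, Set.mem_Ioc, PIset]
      constructor
      · rintro ⟨hq, M₀, M₁, M₂, hP, hoptat, hPI0⟩
        refine ⟨hq, ?_⟩
        obtain ⟨⟨a0, a1, a2, b0, b1, b2⟩, s1, s2⟩ := hcon _ _ _ hP
        rw [hPI] at hPI0
        have hm0 : mm M₀ = 0 :=
          le_antisymm (by nlinarith [mul_nonneg hr2.le b0]) a0
        have hn0 : nn M₀ = 0 :=
          le_antisymm (by nlinarith [mul_nonneg hr1.le a0]) b0
        rw [hopt q hq, hPB] at hoptat
        have hle : r1 * max q C₁ + r2 * max q C₂ ≤ r1 * C₁ + r2 * C₂ := by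
          rw [← hoptat, hm0, hn0]
          have A1 : C₁ * mm M₁ + (1-C₁) * mm M₂ ≤ C₁ := by
            nlinarith [mul_nonneg a2 (by linarith : (0:ℝ) ≤ 2*C₁-1)]
          have B1 : (1-C₂) * nn M₁ + C₂ * nn M₂ ≤ C₂ := by
            nlinarith [mul_nonneg b1 (by linarith : (0:ℝ) ≤ 2*C₂-1)]
          have A2 : q * 0 + (C₁ * mm M₁ + (1-C₁) * mm M₂) ≤ C₁ := by linarith
          have B2 : q * 0 + ((1-C₂) * nn M₁ + C₂ * nn M₂) ≤ C₂ := by linarith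
          linarith [mul_le_mul_of_nonneg_left A2 hr1.le, mul_le_mul_of_nonneg_left B2 hr2.le]
        have h1 : max q C₁ ≤ C₁ := by
          nlinarith [mul_nonneg hr2.le (sub_nonneg.2 (le_max_right q C₂))]
        exact le_trans (le_max_left q C₁) h1
      · rintro ⟨hq, hqC⟩
        exact ⟨hq, 0, P₁, P₂, W1,
          by rw [V1, hopt q hq, max_eq_right hqC, max_eq_right (hqC.trans hC12)],
          by rw [hPI, mm0, nn0]; ring⟩
    rw [q0low, hset, csSup_Ioc C₁pos]



lemma trace_vmv (v w : Fin 2 → ℂ) : trace (vecMulVec v w) = w ⬝ᵥ v := by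
  simp [trace, vecMulVec_apply, dotProduct, Fin.sum_univ_two, diag]
  ring


set_option maxHeartbeats 1000000 in
/-- If `1/2 < C₁ ≤ C₂` and `ρ₁₂ = 0`, then
`P̄_cor^opt(C₁) = ρ₁₁C₁ + ρ₂₂C₂`, `P_I(C₁) = [0,ρ₁₁]` when `C₁ < C₂`,
`P_I(C₁) = [0,1]` when `C₁ = C₂`; consequently `q₀⁽⁰⁾ = C₁`. -/
theorem stmt10
    (q₁ q₂ : ℝ) (ρ₁ ρ₂ : Matrix (Fin 2) (Fin 2) ℂ)
    (hq₁ : 0 < q₁) (hq₂ : 0 < q₂) (hq : q₁ + q₂ = 1)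
    (hρ₁ : ρ₁.PosSemidef) (htr₁ : ρ₁.trace = 1)
    (hρ₂ : ρ₂.PosSemidef) (htr₂ : ρ₂.trace = 1)
    (hρ0 : (rho0 q₁ q₂ ρ₁ ρ₂).PosDef)
    (S : Matrix (Fin 2) (Fin 2) ℂ) (hS : S.PosSemidef) (hSS : S * S = rho0 q₁ q₂ ρ₁ ρ₂)
    (ν₁ ν₂ : Fin 2 → ℂ)
    (hν₁ : star ν₁ ⬝ᵥ ν₁ = 1) (hν₂ : star ν₂ ⬝ᵥ ν₂ = 1) (hν₁₂ : star ν₁ ⬝ᵥ ν₂ = 0)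
    (C₁ C₂ : ℝ) (hC12 : C₁ ≤ C₂) (hCsum : 1 < C₁ + C₂)
    (hbar₁ : S * ((C₁ : ℂ) • vecMulVec ν₁ (star ν₁)
        + ((1 - C₂ : ℝ) : ℂ) • vecMulVec ν₂ (star ν₂)) * S = (q₁ : ℂ) • ρ₁)
    (hbar₂ : S * (((1 - C₁ : ℝ) : ℂ) • vecMulVec ν₁ (star ν₁)
        + (C₂ : ℂ) • vecMulVec ν₂ (star ν₂)) * S = (q₂ : ℂ) • ρ₂)
    (ρ11 ρ22 : ℝ) (ρ12 : ℂ)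
    (h11 : (ρ11 : ℂ) = star ν₁ ⬝ᵥ (rho0 q₁ q₂ ρ₁ ρ₂ *ᵥ ν₁))
    (h22 : (ρ22 : ℂ) = star ν₂ ⬝ᵥ (rho0 q₁ q₂ ρ₁ ρ₂ *ᵥ ν₂))
    (h12 : ρ12 = star ν₁ ⬝ᵥ (rho0 q₁ q₂ ρ₁ ρ₂ *ᵥ ν₂))
    (hC₁ : 1 / 2 < C₁) (h12z : ρ12 = 0) :
    PbarOpt C₁ q₁ q₂ ρ₁ ρ₂ = ρ11 * C₁ + ρ22 * C₂ ∧
      (C₁ < C₂ → PIset C₁ q₁ q₂ ρ₁ ρ₂ = Set.Icc 0 ρ11) ∧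
      (C₁ = C₂ → PIset C₁ q₁ q₂ ρ₁ ρ₂ = Set.Icc 0 1) ∧
      q0low q₁ q₂ ρ₁ ρ₂ = C₁ := by
  have hν₂₁ : star ν₂ ⬝ᵥ ν₁ = 0 := by rw [star_dotProduct, hν₁₂, star_zero]
  set P₁ := vecMulVec ν₁ (star ν₁) with hP₁d
  set P₂ := vecMulVec ν₂ (star ν₂) with hP₂d
  have hP₁psd : P₁.PosSemidef := vmv_psd ν₁
  have hP₂psd : P₂.PosSemidef := vmv_psd ν₂
  have hPP : P₁ + P₂ = 1 := complete ν₁ ν₂ hν₁ hν₂ hν₁₂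
  set ρ0 := rho0 q₁ q₂ ρ₁ ρ₂ with hρ0d
  have hherm : ρ0ᴴ = ρ0 := hρ0.1
  -- the (2,1) entry vanishes
  have h21 : star ν₂ ⬝ᵥ (ρ0 *ᵥ ν₁) = 0 := by
    have e : star ν₂ ⬝ᵥ (ρ0 *ᵥ ν₁) = star (star ν₁ ⬝ᵥ (ρ0 *ᵥ ν₂)) := by
      rw [star_dotProduct]
      congr 1
      rw [star_mulVec, hherm, ← dotProduct_mulVec]
    rw [e, ← h12, h12z, star_zero]
  -- ρ0 is diagonal in the ν basis
  have expand : ∀ (A : Matrix (Fin 2) (Fin 2) ℂ),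
      (P₁ + P₂) * A * (P₁ + P₂) = (star ν₁ ⬝ᵥ (A *ᵥ ν₁)) • P₁
        + (star ν₁ ⬝ᵥ (A *ᵥ ν₂)) • vecMulVec ν₁ (star ν₂)
        + (star ν₂ ⬝ᵥ (A *ᵥ ν₁)) • vecMulVec ν₂ (star ν₁)
        + (star ν₂ ⬝ᵥ (A *ᵥ ν₂)) • P₂ := by
    intro A
    rw [hP₁d, hP₂d, add_mul, mul_add, add_mul, add_mul,
      vmv_mul_mid, vmv_mul_mid, vmv_mul_mid, vmv_mul_mid]
    abel
  have hdiag : ρ0 = ((ρ11 : ℝ) : ℂ) • P₁ + ((ρ22 : ℝ) : ℂ) • P₂ := by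
    have h1 : (P₁ + P₂) * ρ0 * (P₁ + P₂) = ρ0 := by rw [hPP, one_mul, mul_one]
    conv_lhs => rw [← h1, expand ρ0]
    rw [← h11, ← h22, ← h12, h12z, h21]
    simp
  -- positivity of the diagonal entries
  have hν₁ne : ν₁ ≠ 0 := by
    intro h
    rw [h] at hν₁
    simp at hν₁
  have hν₂ne : ν₂ ≠ 0 := by
    intro h
    rw [h] at hν₂
    simp at hν₂
  have hr1pos : 0 < ρ11 := by
    have h := hρ0.dotProduct_mulVec_pos hν₁ne
    rw [← h11] at h
    have := (Complex.lt_def.mp h).1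
    simpa using this
  have hr2pos : 0 < ρ22 := by
    have h := hρ0.dotProduct_mulVec_pos hν₂ne
    rw [← h22] at h
    have := (Complex.lt_def.mp h).1
    simpa using this
  -- trace normalization
  have hsum1 : ρ11 + ρ22 = 1 := by
    have t1 : trace ρ0 = 1 := by
      rw [hρ0d, rho0, trace_add, trace_smul, trace_smul, htr₁, htr₂]
      simp only [smul_eq_mul, mul_one]
      exact_mod_cast congrArg (fun x : ℝ => (x : ℂ)) hq
    have t2 : trace ρ0 = ((ρ11 : ℝ) : ℂ) + ((ρ22 : ℝ) : ℂ) := by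
      rw [hdiag, trace_add, trace_smul, trace_smul, hP₁d, hP₂d, trace_vmv, trace_vmv,
        hν₁, hν₂]
      simp
    rw [t1] at t2
    exact_mod_cast t2.symm
  -- the positive square root is diagonal as well
  have dm : ∀ a b c d : ℂ,
      (a • P₁ + b • P₂) * (c • P₁ + d • P₂) = (a*c) • P₁ + (b*d) • P₂ := by
    intro a b c d
    rw [hP₁d, hP₂d, add_mul, mul_add, mul_add,
      smul_mul_assoc, smul_mul_assoc, smul_mul_assoc, smul_mul_assoc,
      mul_smul_comm, mul_smul_comm, mul_smul_comm, mul_smul_comm,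
      vmv_mul_vmv, vmv_mul_vmv, vmv_mul_vmv, vmv_mul_vmv, hν₁, hν₂, hν₁₂, hν₂₁]
    simp [smul_smul, mul_comm]
  set T : Matrix (Fin 2) (Fin 2) ℂ :=
    ((Real.sqrt ρ11 : ℝ) : ℂ) • P₁ + ((Real.sqrt ρ22 : ℝ) : ℂ) • P₂ with hTd
  have hTpsd : T.PosSemidef :=
    (smul_psd hP₁psd _ (Real.sqrt_nonneg _)).add (smul_psd hP₂psd _ (Real.sqrt_nonneg _))
  have hTT : T * T = ρ0 := by
    rw [hTd, dm, hdiag]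
    congr 2
    · rw [← Complex.ofReal_mul, Real.mul_self_sqrt hr1pos.le]
    · rw [← Complex.ofReal_mul, Real.mul_self_sqrt hr2pos.le]
  have hST : S = T := by
    open scoped MatrixOrder Matrix.Norms.L2Operator in
    exact (CFC.sq_eq_sq_iff S T hS.nonneg hTpsd.nonneg).mp (by rw [pow_two, pow_two, hSS, hTT])
  -- the diagonal forms of q₁ρ₁ and q₂ρ₂
  have e₁ : (q₁ : ℂ) • ρ₁ = ((C₁*ρ11 : ℝ) : ℂ) • P₁ + (((1-C₂)*ρ22 : ℝ) : ℂ) • P₂ := by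
    rw [← hbar₁, hST, hTd, dm, dm]
    congr 2
    · push_cast
      have := Real.mul_self_sqrt hr1pos.le
      have h : (Real.sqrt ρ11 : ℂ) * (Real.sqrt ρ11 : ℂ) = (ρ11 : ℂ) := by
        exact_mod_cast congrArg (fun x : ℝ => (x : ℂ)) this
      linear_combination (C₁ : ℂ) * h
    · push_cast
      have := Real.mul_self_sqrt hr2pos.le
      have h : (Real.sqrt ρ22 : ℂ) * (Real.sqrt ρ22 : ℂ) = (ρ22 : ℂ) := by
        exact_mod_cast congrArg (fun x : ℝ => (x : ℂ)) this
      linear_combination (1 - (C₂:ℂ)) * h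
  have e₂ : (q₂ : ℂ) • ρ₂ = (((1-C₁)*ρ11 : ℝ) : ℂ) • P₁ + ((C₂*ρ22 : ℝ) : ℂ) • P₂ := by
    rw [← hbar₂, hST, hTd, dm, dm]
    congr 2
    · push_cast
      have := Real.mul_self_sqrt hr1pos.le
      have h : (Real.sqrt ρ11 : ℂ) * (Real.sqrt ρ11 : ℂ) = (ρ11 : ℂ) := by
        exact_mod_cast congrArg (fun x : ℝ => (x : ℂ)) this
      linear_combination (1 - (C₁:ℂ)) * h
    · push_cast
      have := Real.mul_self_sqrt hr2pos.le
      have h : (Real.sqrt ρ22 : ℂ) * (Real.sqrt ρ22 : ℂ) = (ρ22 : ℂ) := by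
        exact_mod_cast congrArg (fun x : ℝ => (x : ℂ)) this
      linear_combination (C₂:ℂ) * h
  exact main q₁ q₂ ρ₁ ρ₂ ν₁ ν₂ hν₁ hν₂ hν₁₂ C₁ C₂ ρ11 ρ22 hr1pos hr2pos hsum1 hC₁ hC12 e₁ e₂


end FRIR
end
end

section
/- Suppose C_1 < C_2, ρ_{12} = 0, and q_0^{(0)} < q < q_0^{(1)}. Then every POVM (M_0,M_1,M_2) attaining P̄_cor = P̄_cor^opt(q) satisfies ρ_0^{1/2}M_0ρ_0^{1/2} = ρ_{11}|ν_1⟩⟨ν_1|, M_1 = 0 and ρ_0^{1/2}M_2ρ_0^{1/2} = ρ_{22}|ν_2⟩⟨ν_2|; in particular the optimal POVM is unique and P_I(q) = {ρ_{11}}. -/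
open Matrix ComplexOrder

noncomputable section

namespace FRIR

set_option linter.unusedSectionVars false

variable {n : Type*} [Fintype n] [DecidableEq n]

lemma mul_vecMulVec' (A : Matrix n n ℂ) (u v : n → ℂ) :
    A * vecMulVec u v = vecMulVec (A *ᵥ u) v := by
  ext i j
  simp only [Matrix.mul_apply, vecMulVec_apply, Matrix.mulVec, dotProduct]
  rw [Finset.sum_mul]
  exact Finset.sum_congr rfl fun k _ => by ring

lemma vecMulVec_mul' (u v : n → ℂ) (A : Matrix n n ℂ) :
    vecMulVec u v * A = vecMulVec u (v ᵥ* A) := by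
  ext i j
  simp [Matrix.mul_apply, vecMulVec_apply, Matrix.vecMul, dotProduct, Finset.mul_sum, mul_assoc]

lemma vecMulVec_mulVec' (u v x : n → ℂ) :
    vecMulVec u v *ᵥ x = (v ⬝ᵥ x) • u := by
  ext i
  simp only [Matrix.mulVec, vecMulVec_apply, dotProduct, Pi.smul_apply, smul_eq_mul]
  rw [Finset.sum_mul]
  exact Finset.sum_congr rfl fun k _ => by ring

lemma trace_vecMulVec' (u v : n → ℂ) : (vecMulVec u v).trace = v ⬝ᵥ u := by
  simp [Matrix.trace, Matrix.diag, vecMulVec_apply, dotProduct, mul_comm]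

lemma trace_vecMulVec_mul (u v : n → ℂ) (A : Matrix n n ℂ) :
    (vecMulVec u v * A).trace = v ⬝ᵥ (A *ᵥ u) := by
  rw [vecMulVec_mul', trace_vecMulVec', dotProduct_mulVec]

lemma star_dot (u v : n → ℂ) : star u ⬝ᵥ v = star (star v ⬝ᵥ u) := by
  simp [dotProduct, star_sum, mul_comm]

lemma posSemidef_vecMulVec_star (u : n → ℂ) : (vecMulVec u (star u)).PosSemidef := by
  rw [vecMulVec_eq Unit, ← conjTranspose_replicateCol]
  exact posSemidef_self_mul_conjTranspose _

lemma posSemidef_ofReal_smul {r : ℝ} (hr : 0 ≤ r) {A : Matrix n n ℂ}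
    (hA : A.PosSemidef) : ((r : ℂ) • A).PosSemidef := by
  constructor
  · unfold Matrix.IsHermitian
    rw [conjTranspose_smul, hA.1.eq]
    simp
  · intro x
    exact (hA.smul (by exact_mod_cast hr : (0:ℂ) ≤ (r:ℂ))).2 x


lemma vecMulVec_mul_vecMulVec (u v w x : n → ℂ) :
    vecMulVec u v * vecMulVec w x = (v ⬝ᵥ w) • vecMulVec u x := by
  ext i j
  simp only [Matrix.mul_apply, vecMulVec_apply, dotProduct, Matrix.smul_apply, smul_eq_mul]
  rw [Finset.sum_mul]
  exact Finset.sum_congr rfl fun k _ => by ring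

/-- The quadratic form `⟨u, N u⟩`. -/
def qf (u : Fin 2 → ℂ) (N : Matrix (Fin 2) (Fin 2) ℂ) : ℂ := star u ⬝ᵥ (N *ᵥ u)

lemma qf_add (u : Fin 2 → ℂ) (A B : Matrix (Fin 2) (Fin 2) ℂ) :
    qf u (A + B) = qf u A + qf u B := by
  simp only [qf, add_mulVec, dotProduct_add]

lemma qf_smul (u : Fin 2 → ℂ) (c : ℂ) (A : Matrix (Fin 2) (Fin 2) ℂ) :
    qf u (c • A) = c * qf u A := by
  simp only [qf, smul_mulVec, dotProduct_smul, smul_eq_mul]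

lemma qf_nonneg {N : Matrix (Fin 2) (Fin 2) ℂ} (hN : N.PosSemidef) (u : Fin 2 → ℂ) :
    0 ≤ qf u N := hN.dotProduct_mulVec_nonneg u

lemma qf_im_zero {N : Matrix (Fin 2) (Fin 2) ℂ} (hN : N.PosSemidef) (u : Fin 2 → ℂ) :
    qf u N = ((qf u N).re : ℂ) := by
  have h := Complex.nonneg_iff.mp (qf_nonneg hN u)
  exact Complex.ext (by simp) (by simpa using h.2.symm)

lemma ortho_complete {ν₁ ν₂ : Fin 2 → ℂ}
    (hν₁ : star ν₁ ⬝ᵥ ν₁ = 1) (hν₂ : star ν₂ ⬝ᵥ ν₂ = 1) (hν₁₂ : star ν₁ ⬝ᵥ ν₂ = 0) :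
    vecMulVec ν₁ (star ν₁) + vecMulVec ν₂ (star ν₂) = 1 := by
  have h21 : star ν₂ ⬝ᵥ ν₁ = 0 := by rw [star_dot, hν₁₂]; simp
  set V : Matrix (Fin 2) (Fin 2) ℂ := Matrix.of (fun i j => ![ν₁ i, ν₂ i] j) with hV
  have hVV : Vᴴ * V = 1 := by
    ext i j
    have e1 := hν₁; have e2 := hν₂; have e12 := hν₁₂; have e21 := h21
    simp only [dotProduct, Fin.sum_univ_two, Pi.star_apply] at e1 e2 e12 e21
    fin_cases i <;> fin_cases j <;>
      simp only [Matrix.mul_apply, conjTranspose_apply, hV, Matrix.of_apply,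
        Fin.sum_univ_two, Matrix.one_apply, Matrix.cons_val_zero, Matrix.cons_val_one,
        Matrix.head_cons, Fin.mk_zero, Fin.mk_one, if_true, if_false, Fin.zero_eta, Fin.isValue,
        ne_eq, one_ne_zero, not_false_eq_true, zero_ne_one, RCLike.star_def] <;>
      first
        | exact e1
        | exact e2
        | exact e12
        | exact e21
        | simp_all
  have hVV' : V * Vᴴ = 1 := mul_eq_one_comm.mp hVV
  calc vecMulVec ν₁ (star ν₁) + vecMulVec ν₂ (star ν₂) = V * Vᴴ := by
        ext i j
        simp only [Matrix.mul_apply, Fin.sum_univ_two, vecMulVec_apply, hV, Matrix.of_apply,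
          conjTranspose_apply, Matrix.add_apply, Pi.star_apply, Matrix.cons_val_zero,
          Matrix.cons_val_one, Matrix.head_cons, RCLike.star_def]
    _ = 1 := hVV'


lemma trace_eq_qf {ν₁ ν₂ : Fin 2 → ℂ}
    (hone : vecMulVec ν₁ (star ν₁) + vecMulVec ν₂ (star ν₂) = 1)
    (N : Matrix (Fin 2) (Fin 2) ℂ) : N.trace = qf ν₁ N + qf ν₂ N := by
  conv_lhs => rw [← Matrix.one_mul N, ← hone]
  rw [Matrix.add_mul, trace_add, trace_vecMulVec_mul, trace_vecMulVec_mul]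
  rfl

lemma qf_proj (u v : Fin 2 → ℂ) :
    qf u (vecMulVec v (star v)) = (star v ⬝ᵥ u) * (star u ⬝ᵥ v) := by
  unfold qf
  rw [vecMulVec_mulVec', dotProduct_smul]
  simp [mul_comm]

lemma cyc_trace (S X M : Matrix (Fin 2) (Fin 2) ℂ) :
    (S * X * S * M).trace = (X * (S * M * S)).trace := by
  have e : S * X * S * M = S * (X * (S * M)) := by
    rw [Matrix.mul_assoc, Matrix.mul_assoc]
  rw [e, trace_mul_comm, Matrix.mul_assoc, Matrix.mul_assoc]

lemma expand_trace (ν₁ ν₂ : Fin 2 → ℂ) (c d : ℂ) (N : Matrix (Fin 2) (Fin 2) ℂ) :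
    ((c • vecMulVec ν₁ (star ν₁) + d • vecMulVec ν₂ (star ν₂)) * N).trace
      = c * qf ν₁ N + d * qf ν₂ N := by
  rw [Matrix.add_mul, trace_add, Matrix.smul_mul, Matrix.smul_mul, trace_smul, trace_smul,
    trace_vecMulVec_mul, trace_vecMulVec_mul]
  rfl

lemma pbar_formula
    (q' q₁ q₂ : ℝ) (ρ₁ ρ₂ S : Matrix (Fin 2) (Fin 2) ℂ)
    (ν₁ ν₂ : Fin 2 → ℂ) (C₁ C₂ : ℝ)
    (hSS : S * S = rho0 q₁ q₂ ρ₁ ρ₂)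
    (hone : vecMulVec ν₁ (star ν₁) + vecMulVec ν₂ (star ν₂) = 1)
    (hbar₁ : S * ((C₁ : ℂ) • vecMulVec ν₁ (star ν₁)
        + ((1 - C₂ : ℝ) : ℂ) • vecMulVec ν₂ (star ν₂)) * S = (q₁ : ℂ) • ρ₁)
    (hbar₂ : S * (((1 - C₁ : ℝ) : ℂ) • vecMulVec ν₁ (star ν₁)
        + (C₂ : ℂ) • vecMulVec ν₂ (star ν₂)) * S = (q₂ : ℂ) • ρ₂)
    (M₀ M₁ M₂ : Matrix (Fin 2) (Fin 2) ℂ) :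
    PbarCor q' q₁ q₂ ρ₁ ρ₂ M₀ M₁ M₂ =
      q' * ((qf ν₁ (S*M₀*S)).re + (qf ν₂ (S*M₀*S)).re)
      + (C₁ * (qf ν₁ (S*M₁*S)).re + (1-C₂) * (qf ν₂ (S*M₁*S)).re)
      + ((1-C₁) * (qf ν₁ (S*M₂*S)).re + C₂ * (qf ν₂ (S*M₂*S)).re) := by
  have h1 : (q₁:ℂ) * Matrix.trace (ρ₁ * M₁)
      = (C₁:ℂ) * qf ν₁ (S*M₁*S) + ((1-C₂:ℝ):ℂ) * qf ν₂ (S*M₁*S) := by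
    have e : (q₁:ℂ) * Matrix.trace (ρ₁ * M₁) = Matrix.trace (((q₁:ℂ) • ρ₁) * M₁) := by
      rw [Matrix.smul_mul, trace_smul, smul_eq_mul]
    rw [e, ← hbar₁, cyc_trace, expand_trace]
  have h2 : (q₂:ℂ) * Matrix.trace (ρ₂ * M₂)
      = ((1-C₁:ℝ):ℂ) * qf ν₁ (S*M₂*S) + (C₂:ℂ) * qf ν₂ (S*M₂*S) := by
    have e : (q₂:ℂ) * Matrix.trace (ρ₂ * M₂) = Matrix.trace (((q₂:ℂ) • ρ₂) * M₂) := by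
      rw [Matrix.smul_mul, trace_smul, smul_eq_mul]
    rw [e, ← hbar₂, cyc_trace, expand_trace]
  have h0 : Matrix.trace (rho0 q₁ q₂ ρ₁ ρ₂ * M₀) = qf ν₁ (S*M₀*S) + qf ν₂ (S*M₀*S) := by
    have e := cyc_trace S 1 M₀
    rw [Matrix.mul_one, Matrix.one_mul] at e
    rw [← hSS, e, trace_eq_qf hone]
  unfold PbarCor PIof Pcor
  rw [h0]
  have r1 : q₁ * (Matrix.trace (ρ₁ * M₁)).re = ((q₁:ℂ) * Matrix.trace (ρ₁ * M₁)).re := by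
    rw [Complex.re_ofReal_mul]
  have r2 : q₂ * (Matrix.trace (ρ₂ * M₂)).re = ((q₂:ℂ) * Matrix.trace (ρ₂ * M₂)).re := by
    rw [Complex.re_ofReal_mul]
  rw [r1, r2, h1, h2]
  simp only [Complex.add_re, Complex.re_ofReal_mul, Complex.ofReal_sub, Complex.ofReal_one,
    Complex.neg_re, Complex.sub_re, sub_mul, one_mul]
  ring

lemma proj_mul_proj (u v : Fin 2 → ℂ) (A : Matrix (Fin 2) (Fin 2) ℂ) :
    vecMulVec u (star u) * A * vecMulVec v (star v)
      = (star u ⬝ᵥ (A *ᵥ v)) • vecMulVec u (star v) := by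
  rw [Matrix.mul_assoc, mul_vecMulVec', vecMulVec_mul_vecMulVec]

lemma conj_psd {S M : Matrix (Fin 2) (Fin 2) ℂ} (hS : S.IsHermitian) (hM : M.PosSemidef) :
    (S * M * S).PosSemidef := by
  have h := hM.conjTranspose_mul_mul_same S
  rwa [hS.eq] at h

lemma conj_inv {S : Matrix (Fin 2) (Fin 2) ℂ} (hdet : IsUnit S.det)
    (N : Matrix (Fin 2) (Fin 2) ℂ) : S * (S⁻¹ * N * S⁻¹) * S = N := by
  have e : S * (S⁻¹ * N * S⁻¹) * S = (S * S⁻¹) * N * (S⁻¹ * S) := by noncomm_ring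
  rw [e, mul_nonsing_inv S hdet, nonsing_inv_mul S hdet, Matrix.one_mul, Matrix.mul_one]

lemma inv_psd {S N : Matrix (Fin 2) (Fin 2) ℂ} (hSh : Sᴴ = S) (hN : N.PosSemidef) :
    (S⁻¹ * N * S⁻¹).PosSemidef := by
  have h := hN.conjTranspose_mul_mul_same S⁻¹
  rwa [conjTranspose_nonsing_inv, hSh] at h

lemma povm_of_triple (q₁ q₂ : ℝ) (ρ₁ ρ₂ S : Matrix (Fin 2) (Fin 2) ℂ)
    (hdet : IsUnit S.det) (hSh : Sᴴ = S) (hSS : S * S = rho0 q₁ q₂ ρ₁ ρ₂)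
    {N₀ N₁ N₂ : Matrix (Fin 2) (Fin 2) ℂ}
    (hN₀ : N₀.PosSemidef) (hN₁ : N₁.PosSemidef) (hN₂ : N₂.PosSemidef)
    (hsum : N₀ + N₁ + N₂ = rho0 q₁ q₂ ρ₁ ρ₂) :
    IsPOVM (S⁻¹ * N₀ * S⁻¹) (S⁻¹ * N₁ * S⁻¹) (S⁻¹ * N₂ * S⁻¹) := by
  refine ⟨inv_psd hSh hN₀, inv_psd hSh hN₁, inv_psd hSh hN₂, ?_⟩
  have e : S⁻¹ * N₀ * S⁻¹ + S⁻¹ * N₁ * S⁻¹ + S⁻¹ * N₂ * S⁻¹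
      = S⁻¹ * (N₀ + N₁ + N₂) * S⁻¹ := by noncomm_ring
  rw [e, hsum, ← hSS]
  have e2 : S⁻¹ * (S * S) * S⁻¹ = (S⁻¹ * S) * (S * S⁻¹) := by noncomm_ring
  rw [e2, nonsing_inv_mul S hdet, mul_nonsing_inv S hdet, Matrix.one_mul]

lemma S_det_unit {q₁ q₂ : ℝ} {ρ₁ ρ₂ S : Matrix (Fin 2) (Fin 2) ℂ}
    (hρ0 : (rho0 q₁ q₂ ρ₁ ρ₂).PosDef) (hSS : S * S = rho0 q₁ q₂ ρ₁ ρ₂) :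
    IsUnit S.det := by
  have h : IsUnit (rho0 q₁ q₂ ρ₁ ρ₂).det := (Matrix.isUnit_iff_isUnit_det _).mp hρ0.isUnit
  rw [← hSS, Matrix.det_mul] at h
  exact isUnit_of_mul_isUnit_left h

lemma rho0_decomp (q₁ q₂ : ℝ) (ρ₁ ρ₂ : Matrix (Fin 2) (Fin 2) ℂ)
    (hherm : (rho0 q₁ q₂ ρ₁ ρ₂).IsHermitian)
    (ν₁ ν₂ : Fin 2 → ℂ)
    (hone : vecMulVec ν₁ (star ν₁) + vecMulVec ν₂ (star ν₂) = 1)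
    (ρ11 ρ22 : ℝ)
    (h11 : (ρ11 : ℂ) = star ν₁ ⬝ᵥ (rho0 q₁ q₂ ρ₁ ρ₂ *ᵥ ν₁))
    (h22 : (ρ22 : ℂ) = star ν₂ ⬝ᵥ (rho0 q₁ q₂ ρ₁ ρ₂ *ᵥ ν₂))
    (h12z : star ν₁ ⬝ᵥ (rho0 q₁ q₂ ρ₁ ρ₂ *ᵥ ν₂) = 0) :
    rho0 q₁ q₂ ρ₁ ρ₂ = (ρ11 : ℂ) • vecMulVec ν₁ (star ν₁)
      + (ρ22 : ℂ) • vecMulVec ν₂ (star ν₂) := by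
  set ρ := rho0 q₁ q₂ ρ₁ ρ₂ with hρ
  have h21 : star ν₂ ⬝ᵥ (ρ *ᵥ ν₁) = 0 := by
    have e : star ν₂ ⬝ᵥ (ρ *ᵥ ν₁) = star (star (ρ *ᵥ ν₁) ⬝ᵥ ν₂) := star_dot _ _
    rw [e, star_mulVec, hherm.eq, ← dotProduct_mulVec, h12z, star_zero]
  have P1 := vecMulVec ν₁ (star ν₁)
  calc ρ = (vecMulVec ν₁ (star ν₁) + vecMulVec ν₂ (star ν₂)) * ρ
        * (vecMulVec ν₁ (star ν₁) + vecMulVec ν₂ (star ν₂)) := by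
        rw [hone, Matrix.one_mul, Matrix.mul_one]
    _ = vecMulVec ν₁ (star ν₁) * ρ * vecMulVec ν₁ (star ν₁)
        + vecMulVec ν₁ (star ν₁) * ρ * vecMulVec ν₂ (star ν₂)
        + vecMulVec ν₂ (star ν₂) * ρ * vecMulVec ν₁ (star ν₁)
        + vecMulVec ν₂ (star ν₂) * ρ * vecMulVec ν₂ (star ν₂) := by noncomm_ring
    _ = (ρ11 : ℂ) • vecMulVec ν₁ (star ν₁) + (ρ22 : ℂ) • vecMulVec ν₂ (star ν₂) := by
        rw [proj_mul_proj, proj_mul_proj, proj_mul_proj, proj_mul_proj,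
          ← h11, ← h22, h12z, h21, zero_smul, zero_smul, add_zero, add_zero]

lemma qf_sum_povm (q₁ q₂ : ℝ) (ρ₁ ρ₂ S : Matrix (Fin 2) (Fin 2) ℂ)
    (hSS : S * S = rho0 q₁ q₂ ρ₁ ρ₂)
    {M₀ M₁ M₂ : Matrix (Fin 2) (Fin 2) ℂ} (hMsum : M₀ + M₁ + M₂ = 1)
    (u : Fin 2 → ℂ) :
    qf u (S*M₀*S) + qf u (S*M₁*S) + qf u (S*M₂*S) = qf u (rho0 q₁ q₂ ρ₁ ρ₂) := by
  rw [← qf_add, ← qf_add]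
  congr 1
  have e : S*M₀*S + S*M₁*S + S*M₂*S = S * (M₀ + M₁ + M₂) * S := by noncomm_ring
  rw [e, hMsum, Matrix.mul_one, hSS]

lemma rho_sum_one (q₁ q₂ : ℝ) (ρ₁ ρ₂ : Matrix (Fin 2) (Fin 2) ℂ)
    (hq : q₁ + q₂ = 1) (htr₁ : ρ₁.trace = 1) (htr₂ : ρ₂.trace = 1)
    (ν₁ ν₂ : Fin 2 → ℂ)
    (hone : vecMulVec ν₁ (star ν₁) + vecMulVec ν₂ (star ν₂) = 1)
    (ρ11 ρ22 : ℝ)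
    (h11 : (ρ11 : ℂ) = star ν₁ ⬝ᵥ (rho0 q₁ q₂ ρ₁ ρ₂ *ᵥ ν₁))
    (h22 : (ρ22 : ℂ) = star ν₂ ⬝ᵥ (rho0 q₁ q₂ ρ₁ ρ₂ *ᵥ ν₂)) :
    ρ11 + ρ22 = 1 := by
  have t1 : (rho0 q₁ q₂ ρ₁ ρ₂).trace = 1 := by
    unfold rho0
    rw [trace_add, trace_smul, trace_smul, htr₁, htr₂, smul_eq_mul, smul_eq_mul,
      mul_one, mul_one]
    exact_mod_cast congrArg (fun x : ℝ => (x : ℂ)) hq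
  have t2 : (rho0 q₁ q₂ ρ₁ ρ₂).trace = (ρ11 : ℂ) + (ρ22 : ℂ) := by
    rw [trace_eq_qf hone]
    unfold qf
    rw [← h11, ← h22]
  rw [t1] at t2
  exact_mod_cast t2.symm

lemma qf_rho0_nonneg (q₁ q₂ : ℝ) (ρ₁ ρ₂ : Matrix (Fin 2) (Fin 2) ℂ)
    (hρ0 : (rho0 q₁ q₂ ρ₁ ρ₂).PosDef) {u : Fin 2 → ℂ} {r : ℝ}
    (hr : (r : ℂ) = star u ⬝ᵥ (rho0 q₁ q₂ ρ₁ ρ₂ *ᵥ u)) : 0 ≤ r := by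
  have h : 0 ≤ qf u (rho0 q₁ q₂ ρ₁ ρ₂) := qf_nonneg hρ0.posSemidef u
  rw [show qf u (rho0 q₁ q₂ ρ₁ ρ₂) = star u ⬝ᵥ (rho0 q₁ q₂ ρ₁ ρ₂ *ᵥ u) from rfl, ← hr] at h
  exact_mod_cast Complex.zero_le_real.mp h

lemma pbarOpt_eq (q' q₁ q₂ : ℝ) (ρ₁ ρ₂ : Matrix (Fin 2) (Fin 2) ℂ) (B : ℝ)
    (hub : ∀ M₀ M₁ M₂, IsPOVM M₀ M₁ M₂ → PbarCor q' q₁ q₂ ρ₁ ρ₂ M₀ M₁ M₂ ≤ B)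
    (hach : ∃ M₀ M₁ M₂, IsPOVM M₀ M₁ M₂ ∧ PbarCor q' q₁ q₂ ρ₁ ρ₂ M₀ M₁ M₂ = B) :
    PbarOpt q' q₁ q₂ ρ₁ ρ₂ = B := by
  unfold PbarOpt
  apply le_antisymm
  · apply csSup_le
    · obtain ⟨M₀, M₁, M₂, h, hv⟩ := hach
      exact ⟨B, M₀, M₁, M₂, h, hv⟩
    · rintro x ⟨M₀, M₁, M₂, h, rfl⟩
      exact hub _ _ _ h
  · apply le_csSup
    · exact ⟨B, by rintro x ⟨M₀, M₁, M₂, h, rfl⟩; exact hub _ _ _ h⟩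
    · obtain ⟨M₀, M₁, M₂, h, hv⟩ := hach
      exact ⟨M₀, M₁, M₂, h, hv⟩

lemma qf_re_nonneg {N : Matrix (Fin 2) (Fin 2) ℂ} (hN : N.PosSemidef) (u : Fin 2 → ℂ) :
    0 ≤ (qf u N).re := (Complex.nonneg_iff.mp (qf_nonneg hN u)).1

lemma qf_projs {ν₁ ν₂ : Fin 2 → ℂ}
    (hν₁ : star ν₁ ⬝ᵥ ν₁ = 1) (hν₂ : star ν₂ ⬝ᵥ ν₂ = 1) (hν₁₂ : star ν₁ ⬝ᵥ ν₂ = 0) :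
    qf ν₁ (vecMulVec ν₁ (star ν₁)) = 1 ∧ qf ν₂ (vecMulVec ν₁ (star ν₁)) = 0 ∧
    qf ν₁ (vecMulVec ν₂ (star ν₂)) = 0 ∧ qf ν₂ (vecMulVec ν₂ (star ν₂)) = 1 := by
  have h21 : star ν₂ ⬝ᵥ ν₁ = 0 := by rw [star_dot, hν₁₂, star_zero]
  refine ⟨?_, ?_, ?_, ?_⟩ <;> rw [qf_proj] <;> simp [hν₁, hν₂, hν₁₂, h21]

lemma PIof_formula (q₁ q₂ : ℝ) (ρ₁ ρ₂ S : Matrix (Fin 2) (Fin 2) ℂ)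
    (ν₁ ν₂ : Fin 2 → ℂ)
    (hSS : S * S = rho0 q₁ q₂ ρ₁ ρ₂)
    (hone : vecMulVec ν₁ (star ν₁) + vecMulVec ν₂ (star ν₂) = 1)
    (M₀ : Matrix (Fin 2) (Fin 2) ℂ) :
    PIof q₁ q₂ ρ₁ ρ₂ M₀ = (qf ν₁ (S*M₀*S)).re + (qf ν₂ (S*M₀*S)).re := by
  unfold PIof
  have e := cyc_trace S 1 M₀
  rw [Matrix.mul_one, Matrix.one_mul] at e
  rw [← hSS, e, trace_eq_qf hone, Complex.add_re]

lemma ach_spec (q₁ q₂ : ℝ) (ρ₁ ρ₂ S : Matrix (Fin 2) (Fin 2) ℂ)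
    (hρ0 : (rho0 q₁ q₂ ρ₁ ρ₂).PosDef) (hS : S.PosSemidef)
    (hSS : S * S = rho0 q₁ q₂ ρ₁ ρ₂)
    {N₀ N₁ N₂ : Matrix (Fin 2) (Fin 2) ℂ}
    (hN₀ : N₀.PosSemidef) (hN₁ : N₁.PosSemidef) (hN₂ : N₂.PosSemidef)
    (hsum : N₀ + N₁ + N₂ = rho0 q₁ q₂ ρ₁ ρ₂) :
    ∃ M₀ M₁ M₂, IsPOVM M₀ M₁ M₂ ∧ S*M₀*S = N₀ ∧ S*M₁*S = N₁ ∧ S*M₂*S = N₂ := by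
  have hdet := S_det_unit hρ0 hSS
  exact ⟨_, _, _, povm_of_triple q₁ q₂ ρ₁ ρ₂ S hdet hS.1.eq hSS hN₀ hN₁ hN₂ hsum,
    conj_inv hdet N₀, conj_inv hdet N₁, conj_inv hdet N₂⟩

lemma povm_data (q' q₁ q₂ : ℝ) (ρ₁ ρ₂ S : Matrix (Fin 2) (Fin 2) ℂ)
    (ν₁ ν₂ : Fin 2 → ℂ) (C₁ C₂ : ℝ) (ρ11 ρ22 : ℝ)
    (hS : S.PosSemidef)
    (hSS : S * S = rho0 q₁ q₂ ρ₁ ρ₂)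
    (hone : vecMulVec ν₁ (star ν₁) + vecMulVec ν₂ (star ν₂) = 1)
    (hbar₁ : S * ((C₁ : ℂ) • vecMulVec ν₁ (star ν₁)
        + ((1 - C₂ : ℝ) : ℂ) • vecMulVec ν₂ (star ν₂)) * S = (q₁ : ℂ) • ρ₁)
    (hbar₂ : S * (((1 - C₁ : ℝ) : ℂ) • vecMulVec ν₁ (star ν₁)
        + (C₂ : ℂ) • vecMulVec ν₂ (star ν₂)) * S = (q₂ : ℂ) • ρ₂)
    (h11 : (ρ11 : ℂ) = star ν₁ ⬝ᵥ (rho0 q₁ q₂ ρ₁ ρ₂ *ᵥ ν₁))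
    (h22 : (ρ22 : ℂ) = star ν₂ ⬝ᵥ (rho0 q₁ q₂ ρ₁ ρ₂ *ᵥ ν₂))
    {M₀ M₁ M₂ : Matrix (Fin 2) (Fin 2) ℂ} (hP : IsPOVM M₀ M₁ M₂) :
    ∃ a₀ a₁ a₂ b₀ b₁ b₂ : ℝ,
      0 ≤ a₀ ∧ 0 ≤ a₁ ∧ 0 ≤ a₂ ∧ 0 ≤ b₀ ∧ 0 ≤ b₁ ∧ 0 ≤ b₂ ∧
      a₀ + a₁ + a₂ = ρ11 ∧ b₀ + b₁ + b₂ = ρ22 ∧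
      PbarCor q' q₁ q₂ ρ₁ ρ₂ M₀ M₁ M₂
        = q' * (a₀ + b₀) + (C₁ * a₁ + (1-C₂) * b₁) + ((1-C₁) * a₂ + C₂ * b₂) ∧
      PIof q₁ q₂ ρ₁ ρ₂ M₀ = a₀ + b₀ := by
  obtain ⟨hM₀, hM₁, hM₂, hMsum⟩ := hP
  have hp₀ := conj_psd hS.1 hM₀
  have hp₁ := conj_psd hS.1 hM₁
  have hp₂ := conj_psd hS.1 hM₂
  refine ⟨(qf ν₁ (S*M₀*S)).re, (qf ν₁ (S*M₁*S)).re, (qf ν₁ (S*M₂*S)).re,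
    (qf ν₂ (S*M₀*S)).re, (qf ν₂ (S*M₁*S)).re, (qf ν₂ (S*M₂*S)).re,
    qf_re_nonneg hp₀ _, qf_re_nonneg hp₁ _, qf_re_nonneg hp₂ _,
    qf_re_nonneg hp₀ _, qf_re_nonneg hp₁ _, qf_re_nonneg hp₂ _, ?_, ?_, ?_, ?_⟩
  · have h := congrArg Complex.re (qf_sum_povm q₁ q₂ ρ₁ ρ₂ S hSS hMsum ν₁)
    simpa [Complex.add_re, show qf ν₁ (rho0 q₁ q₂ ρ₁ ρ₂)
      = ((ρ11:ℝ):ℂ) from h11.symm] using h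
  · have h := congrArg Complex.re (qf_sum_povm q₁ q₂ ρ₁ ρ₂ S hSS hMsum ν₂)
    simpa [Complex.add_re, show qf ν₂ (rho0 q₁ q₂ ρ₁ ρ₂)
      = ((ρ22:ℝ):ℂ) from h22.symm] using h
  · rw [pbar_formula q' q₁ q₂ ρ₁ ρ₂ S ν₁ ν₂ C₁ C₂ hSS hone hbar₁ hbar₂]
  · exact PIof_formula q₁ q₂ ρ₁ ρ₂ S ν₁ ν₂ hSS hone M₀

lemma vecMulVec_zero_left (v : Fin 2 → ℂ) : vecMulVec (0 : Fin 2 → ℂ) v = 0 := by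
  ext i j; simp [vecMulVec_apply]

lemma kill_matrix {ν₁ ν₂ : Fin 2 → ℂ}
    (hone : vecMulVec ν₁ (star ν₁) + vecMulVec ν₂ (star ν₂) = 1)
    {N : Matrix (Fin 2) (Fin 2) ℂ} (h1 : N *ᵥ ν₁ = 0) (h2 : N *ᵥ ν₂ = 0) : N = 0 := by
  calc N = N * (vecMulVec ν₁ (star ν₁) + vecMulVec ν₂ (star ν₂)) := by
        rw [hone, Matrix.mul_one]
    _ = vecMulVec (N *ᵥ ν₁) (star ν₁) + vecMulVec (N *ᵥ ν₂) (star ν₂) := by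
        rw [Matrix.mul_add, mul_vecMulVec', mul_vecMulVec']
    _ = 0 := by rw [h1, h2, vecMulVec_zero_left, vecMulVec_zero_left, add_zero]

lemma reduce_matrix {u w : Fin 2 → ℂ}
    (hone : vecMulVec u (star u) + vecMulVec w (star w) = 1)
    {N : Matrix (Fin 2) (Fin 2) ℂ} (hv : N *ᵥ w = 0) (hw : star w ᵥ* N = 0) :
    N = (star u ⬝ᵥ (N *ᵥ u)) • vecMulVec u (star u) := by
  have hcross : star w ⬝ᵥ (N *ᵥ u) = 0 := by
    rw [dotProduct_mulVec, hw, zero_dotProduct]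
  have hcross2 : star w ⬝ᵥ (N *ᵥ w) = 0 := by rw [hv, dotProduct_zero]
  have hcross3 : star u ⬝ᵥ (N *ᵥ w) = 0 := by rw [hv, dotProduct_zero]
  calc N = (vecMulVec u (star u) + vecMulVec w (star w)) * N
        * (vecMulVec u (star u) + vecMulVec w (star w)) := by
        rw [hone, Matrix.one_mul, Matrix.mul_one]
    _ = vecMulVec u (star u) * N * vecMulVec u (star u)
        + vecMulVec u (star u) * N * vecMulVec w (star w)
        + vecMulVec w (star w) * N * vecMulVec u (star u)
        + vecMulVec w (star w) * N * vecMulVec w (star w) := by noncomm_ring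
    _ = (star u ⬝ᵥ (N *ᵥ u)) • vecMulVec u (star u) := by
        rw [proj_mul_proj, proj_mul_proj, proj_mul_proj, proj_mul_proj,
          hcross, hcross2, hcross3, zero_smul, zero_smul, zero_smul,
          add_zero, add_zero, add_zero]

lemma inv_conj {S : Matrix (Fin 2) (Fin 2) ℂ} (hdet : IsUnit S.det)
    (N : Matrix (Fin 2) (Fin 2) ℂ) : S⁻¹ * (S * N * S) * S⁻¹ = N := by
  have e : S⁻¹ * (S * N * S) * S⁻¹ = (S⁻¹ * S) * N * (S * S⁻¹) := by noncomm_ring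
  rw [e, mul_nonsing_inv S hdet, nonsing_inv_mul S hdet, Matrix.one_mul, Matrix.mul_one]

lemma qf_zero (u : Fin 2 → ℂ) : qf u 0 = 0 := by simp [qf]

lemma master
    (q₁ q₂ : ℝ) (ρ₁ ρ₂ : Matrix (Fin 2) (Fin 2) ℂ)
    (hq₁ : 0 < q₁) (hq₂ : 0 < q₂) (hq : q₁ + q₂ = 1)
    (htr₁ : ρ₁.trace = 1) (htr₂ : ρ₂.trace = 1)
    (hρ0 : (rho0 q₁ q₂ ρ₁ ρ₂).PosDef)
    (S : Matrix (Fin 2) (Fin 2) ℂ) (hS : S.PosSemidef) (hSS : S * S = rho0 q₁ q₂ ρ₁ ρ₂)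
    (ν₁ ν₂ : Fin 2 → ℂ)
    (hν₁ : star ν₁ ⬝ᵥ ν₁ = 1) (hν₂ : star ν₂ ⬝ᵥ ν₂ = 1) (hν₁₂ : star ν₁ ⬝ᵥ ν₂ = 0)
    (C₁ C₂ : ℝ) (hC12 : C₁ ≤ C₂) (hCsum : 1 < C₁ + C₂)
    (hbar₁ : S * ((C₁ : ℂ) • vecMulVec ν₁ (star ν₁)
        + ((1 - C₂ : ℝ) : ℂ) • vecMulVec ν₂ (star ν₂)) * S = (q₁ : ℂ) • ρ₁)
    (hbar₂ : S * (((1 - C₁ : ℝ) : ℂ) • vecMulVec ν₁ (star ν₁)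
        + (C₂ : ℂ) • vecMulVec ν₂ (star ν₂)) * S = (q₂ : ℂ) • ρ₂)
    (ρ11 ρ22 : ℝ)
    (h11 : (ρ11 : ℂ) = star ν₁ ⬝ᵥ (rho0 q₁ q₂ ρ₁ ρ₂ *ᵥ ν₁))
    (h22 : (ρ22 : ℂ) = star ν₂ ⬝ᵥ (rho0 q₁ q₂ ρ₁ ρ₂ *ᵥ ν₂))
    (h12z : star ν₁ ⬝ᵥ (rho0 q₁ q₂ ρ₁ ρ₂ *ᵥ ν₂) = 0) :
    (∀ q', PbarOpt q' q₁ q₂ ρ₁ ρ₂ = max q' (max C₁ (1-C₁)) * ρ11 + max q' C₂ * ρ22) ∧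
    (∀ q', ∃ M₀ M₁ M₂, IsPOVM M₀ M₁ M₂ ∧
        PbarCor q' q₁ q₂ ρ₁ ρ₂ M₀ M₁ M₂ = q' * ρ11 + C₂ * ρ22 ∧
        PIof q₁ q₂ ρ₁ ρ₂ M₀ = ρ11) ∧
    max C₁ (1-C₁) ≤ q0low q₁ q₂ ρ₁ ρ₂ ∧
    q0high q₁ q₂ ρ₁ ρ₂ ≤ C₂ ∧
    0 ≤ ρ11 ∧ 0 ≤ ρ22 ∧ ρ11 + ρ22 = 1 := by
  have hone := ortho_complete hν₁ hν₂ hν₁₂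
  have hd := rho0_decomp q₁ q₂ ρ₁ ρ₂ hρ0.1 ν₁ ν₂ hone ρ11 ρ22 h11 h22 h12z
  have hr11 : 0 ≤ ρ11 := qf_rho0_nonneg q₁ q₂ ρ₁ ρ₂ hρ0 h11
  have hr22 : 0 ≤ ρ22 := qf_rho0_nonneg q₁ q₂ ρ₁ ρ₂ hρ0 h22
  have hsum1 : ρ11 + ρ22 = 1 := rho_sum_one q₁ q₂ ρ₁ ρ₂ hq htr₁ htr₂ ν₁ ν₂ hone ρ11 ρ22 h11 h22
  have hm_le : max C₁ (1-C₁) ≤ C₂ := max_le hC12 (by linarith)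
  have h1C₂ : 1-C₂ ≤ C₂ := by linarith
  obtain ⟨p11, p21, p12, p22⟩ := qf_projs hν₁ hν₂ hν₁₂
  have hN1psd : ((ρ11:ℂ) • vecMulVec ν₁ (star ν₁)).PosSemidef :=
    posSemidef_ofReal_smul hr11 (posSemidef_vecMulVec_star ν₁)
  have hN2psd : ((ρ22:ℂ) • vecMulVec ν₂ (star ν₂)).PosSemidef :=
    posSemidef_ofReal_smul hr22 (posSemidef_vecMulVec_star ν₂)
  -- upper bound
  have ub : ∀ q' M₀ M₁ M₂, IsPOVM M₀ M₁ M₂ → PbarCor q' q₁ q₂ ρ₁ ρ₂ M₀ M₁ M₂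
      ≤ max q' (max C₁ (1-C₁)) * ρ11 + max q' C₂ * ρ22 := by
    intro q' M₀ M₁ M₂ hP
    obtain ⟨a₀,a₁,a₂,b₀,b₁,b₂,ha₀,ha₁,ha₂,hb₀,hb₁,hb₂,hsa,hsb,hval,hpi⟩ :=
      povm_data q' q₁ q₂ ρ₁ ρ₂ S ν₁ ν₂ C₁ C₂ ρ11 ρ22 hS hSS hone hbar₁ hbar₂ h11 h22 hP
    rw [hval]
    have k1 : q' ≤ max q' (max C₁ (1-C₁)) := le_max_left _ _
    have k2 : C₁ ≤ max q' (max C₁ (1-C₁)) := le_trans (le_max_left _ _) (le_max_right _ _)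
    have k3 : 1-C₁ ≤ max q' (max C₁ (1-C₁)) := le_trans (le_max_right _ _) (le_max_right _ _)
    have k4 : q' ≤ max q' C₂ := le_max_left _ _
    have k5 : C₂ ≤ max q' C₂ := le_max_right _ _
    have k6 : 1-C₂ ≤ max q' C₂ := le_trans h1C₂ k5
    have p1 := mul_le_mul_of_nonneg_right k1 ha₀
    have p2 := mul_le_mul_of_nonneg_right k2 ha₁
    have p3 := mul_le_mul_of_nonneg_right k3 ha₂
    have p4 := mul_le_mul_of_nonneg_right k4 hb₀
    have p5 := mul_le_mul_of_nonneg_right k6 hb₁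
    have p6 := mul_le_mul_of_nonneg_right k5 hb₂
    have hrw : max q' (max C₁ (1-C₁)) * ρ11 + max q' C₂ * ρ22
        = max q' (max C₁ (1-C₁)) * a₀ + max q' (max C₁ (1-C₁)) * a₁
          + max q' (max C₁ (1-C₁)) * a₂ + max q' C₂ * b₀ + max q' C₂ * b₁
          + max q' C₂ * b₂ := by rw [← hsa, ← hsb]; ring
    linarith
  -- achiever 1
  have ach1 : ∀ q', ∃ M₀ M₁ M₂, IsPOVM M₀ M₁ M₂ ∧
      PbarCor q' q₁ q₂ ρ₁ ρ₂ M₀ M₁ M₂ = q' * ρ11 + C₂ * ρ22 ∧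
      PIof q₁ q₂ ρ₁ ρ₂ M₀ = ρ11 := by
    intro q'
    obtain ⟨M₀,M₁,M₂,hP,e₀,e₁,e₂⟩ := ach_spec q₁ q₂ ρ₁ ρ₂ S hρ0 hS hSS
      hN1psd Matrix.PosSemidef.zero hN2psd (by rw [add_zero]; exact hd.symm)
    refine ⟨M₀,M₁,M₂,hP,?_,?_⟩
    · rw [pbar_formula q' q₁ q₂ ρ₁ ρ₂ S ν₁ ν₂ C₁ C₂ hSS hone hbar₁ hbar₂, e₀, e₁, e₂,
        qf_smul, qf_smul, qf_smul, qf_smul, p11, p21, p12, p22, qf_zero, qf_zero]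
      simp
    · rw [PIof_formula q₁ q₂ ρ₁ ρ₂ S ν₁ ν₂ hSS hone, e₀, qf_smul, qf_smul, p11, p21]
      simp
  -- achiever 2 : (0, ρ11 P₁, ρ22 P₂)
  have ach2 : ∀ q', ∃ M₀ M₁ M₂, IsPOVM M₀ M₁ M₂ ∧
      PbarCor q' q₁ q₂ ρ₁ ρ₂ M₀ M₁ M₂ = C₁ * ρ11 + C₂ * ρ22 ∧
      PIof q₁ q₂ ρ₁ ρ₂ M₀ = 0 := by
    intro q'
    obtain ⟨M₀,M₁,M₂,hP,e₀,e₁,e₂⟩ := ach_spec q₁ q₂ ρ₁ ρ₂ S hρ0 hS hSS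
      Matrix.PosSemidef.zero hN1psd hN2psd (by rw [zero_add]; exact hd.symm)
    refine ⟨M₀,M₁,M₂,hP,?_,?_⟩
    · rw [pbar_formula q' q₁ q₂ ρ₁ ρ₂ S ν₁ ν₂ C₁ C₂ hSS hone hbar₁ hbar₂, e₀, e₁, e₂,
        qf_smul, qf_smul, qf_smul, qf_smul, p11, p21, p12, p22, qf_zero, qf_zero]
      simp
    · rw [PIof_formula q₁ q₂ ρ₁ ρ₂ S ν₁ ν₂ hSS hone, e₀, qf_zero, qf_zero]
      simp
  -- achiever 3 : (0, 0, ρ₀)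
  have ach3 : ∀ q', ∃ M₀ M₁ M₂, IsPOVM M₀ M₁ M₂ ∧
      PbarCor q' q₁ q₂ ρ₁ ρ₂ M₀ M₁ M₂ = (1-C₁) * ρ11 + C₂ * ρ22 ∧
      PIof q₁ q₂ ρ₁ ρ₂ M₀ = 0 := by
    intro q'
    obtain ⟨M₀,M₁,M₂,hP,e₀,e₁,e₂⟩ := ach_spec q₁ q₂ ρ₁ ρ₂ S hρ0 hS hSS
      Matrix.PosSemidef.zero Matrix.PosSemidef.zero hρ0.posSemidef
      (by rw [zero_add, zero_add])
    refine ⟨M₀,M₁,M₂,hP,?_,?_⟩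
    · rw [pbar_formula q' q₁ q₂ ρ₁ ρ₂ S ν₁ ν₂ C₁ C₂ hSS hone hbar₁ hbar₂, e₀, e₁, e₂,
        qf_zero, qf_zero,
        show qf ν₁ (rho0 q₁ q₂ ρ₁ ρ₂) = ((ρ11:ℝ):ℂ) from h11.symm,
        show qf ν₂ (rho0 q₁ q₂ ρ₁ ρ₂) = ((ρ22:ℝ):ℂ) from h22.symm]
      simp
    · rw [PIof_formula q₁ q₂ ρ₁ ρ₂ S ν₁ ν₂ hSS hone, e₀, qf_zero, qf_zero]
      simp
  -- achiever 4 : (1, 0, 0)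
  have ach4 : ∀ q', ∃ M₀ M₁ M₂, IsPOVM M₀ M₁ M₂ ∧
      PbarCor q' q₁ q₂ ρ₁ ρ₂ M₀ M₁ M₂ = q' ∧
      PIof q₁ q₂ ρ₁ ρ₂ M₀ = 1 := by
    intro q'
    have hP : IsPOVM 1 0 0 := ⟨Matrix.PosSemidef.one, Matrix.PosSemidef.zero,
      Matrix.PosSemidef.zero, by rw [add_zero, add_zero]⟩
    have e₀ : S * (1 : Matrix (Fin 2) (Fin 2) ℂ) * S = rho0 q₁ q₂ ρ₁ ρ₂ := by
      rw [Matrix.mul_one, hSS]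
    have e₁ : S * (0 : Matrix (Fin 2) (Fin 2) ℂ) * S = 0 := by
      rw [Matrix.mul_zero, Matrix.zero_mul]
    refine ⟨1, 0, 0, hP, ?_, ?_⟩
    · rw [pbar_formula q' q₁ q₂ ρ₁ ρ₂ S ν₁ ν₂ C₁ C₂ hSS hone hbar₁ hbar₂, e₀, e₁,
        qf_zero, qf_zero,
        show qf ν₁ (rho0 q₁ q₂ ρ₁ ρ₂) = ((ρ11:ℝ):ℂ) from h11.symm,
        show qf ν₂ (rho0 q₁ q₂ ρ₁ ρ₂) = ((ρ22:ℝ):ℂ) from h22.symm]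
      simp
      linear_combination q' * hsum1
    · rw [PIof_formula q₁ q₂ ρ₁ ρ₂ S ν₁ ν₂ hSS hone, e₀,
        show qf ν₁ (rho0 q₁ q₂ ρ₁ ρ₂) = ((ρ11:ℝ):ℂ) from h11.symm,
        show qf ν₂ (rho0 q₁ q₂ ρ₁ ρ₂) = ((ρ22:ℝ):ℂ) from h22.symm]
      simpa using hsum1
  -- optimal value
  have opt : ∀ q', PbarOpt q' q₁ q₂ ρ₁ ρ₂
      = max q' (max C₁ (1-C₁)) * ρ11 + max q' C₂ * ρ22 := by
    intro q'
    apply pbarOpt_eq q' q₁ q₂ ρ₁ ρ₂ _ (ub q')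
    rcases le_total q' (max C₁ (1-C₁)) with h | h
    · rw [max_eq_right h, max_eq_right (le_trans h hm_le)]
      rcases le_total (1-C₁) C₁ with h2 | h2
      · obtain ⟨M₀,M₁,M₂,hP,hv,_⟩ := ach2 q'
        exact ⟨M₀,M₁,M₂,hP, by rw [hv, max_eq_left h2]⟩
      · obtain ⟨M₀,M₁,M₂,hP,hv,_⟩ := ach3 q'
        exact ⟨M₀,M₁,M₂,hP, by rw [hv, max_eq_right h2]⟩
    · rcases le_total q' C₂ with h3 | h3
      · obtain ⟨M₀,M₁,M₂,hP,hv,_⟩ := ach1 q'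
        exact ⟨M₀,M₁,M₂,hP, by rw [hv, max_eq_left h, max_eq_right h3]⟩
      · obtain ⟨M₀,M₁,M₂,hP,hv,_⟩ := ach4 q'
        refine ⟨M₀,M₁,M₂,hP, ?_⟩
        rw [hv, max_eq_left h, max_eq_left h3]
        linear_combination (-q') * hsum1
  refine ⟨opt, ach1, ?_, ?_, hr11, hr22, hsum1⟩
  · -- max C₁ (1-C₁) ≤ q0low
    have hmpos : 0 < max C₁ (1-C₁) := by
      rcases le_total C₁ (1/2 : ℝ) with h | h
      · exact lt_of_lt_of_le (by linarith) (le_max_right _ _)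
      · exact lt_of_lt_of_le (by linarith) (le_max_left _ _)
    apply le_csSup
    · refine ⟨C₂, ?_⟩
      rintro x ⟨hx0, M₀, M₁, M₂, hP, hopt, hpi⟩
      obtain ⟨a₀,a₁,a₂,b₀,b₁,b₂,ha₀,ha₁,ha₂,hb₀,hb₁,hb₂,hsa,hsb,hval,hpi'⟩ :=
        povm_data x q₁ q₂ ρ₁ ρ₂ S ν₁ ν₂ C₁ C₂ ρ11 ρ22 hS hSS hone hbar₁ hbar₂ h11 h22 hP
      rw [hpi] at hpi'
      have ha0 : a₀ = 0 := by linarith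
      have hb0 : b₀ = 0 := by linarith
      have hov := opt x
      rw [hopt, hov] at hval
      have kk1 : x * ρ11 ≤ max x (max C₁ (1-C₁)) * ρ11 :=
        mul_le_mul_of_nonneg_right (le_max_left _ _) hr11
      have kk2 : x * ρ22 ≤ max x C₂ * ρ22 :=
        mul_le_mul_of_nonneg_right (le_max_left _ _) hr22
      have q1 : C₁ * a₁ ≤ C₂ * a₁ := mul_le_mul_of_nonneg_right hC12 ha₁
      have q2 : (1-C₂) * b₁ ≤ C₂ * b₁ := mul_le_mul_of_nonneg_right h1C₂ hb₁
      have q3 : (1-C₁) * a₂ ≤ C₂ * a₂ := mul_le_mul_of_nonneg_right (by linarith) ha₂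
      have hC2r : C₂ * a₁ + C₂ * a₂ + C₂ * b₁ + C₂ * b₂ ≤ C₂ := by
        have e : C₂ * a₁ + C₂ * a₂ + C₂ * b₁ + C₂ * b₂ = C₂ * ((a₁+a₂) + (b₁+b₂)) := by ring
        rw [e]
        have : (a₁ + a₂) + (b₁ + b₂) = 1 := by linarith
        rw [this, mul_one]
      nlinarith
    · exact ⟨hmpos, by
        rcases le_total (1-C₁) C₁ with h2 | h2
        · obtain ⟨M₀,M₁,M₂,hP,hv,hpi⟩ := ach2 (max C₁ (1-C₁))
          refine ⟨M₀,M₁,M₂,hP, ?_, hpi⟩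
          rw [hv, opt (max C₁ (1-C₁)), max_self, max_eq_right hm_le, max_eq_left h2]
        · obtain ⟨M₀,M₁,M₂,hP,hv,hpi⟩ := ach3 (max C₁ (1-C₁))
          refine ⟨M₀,M₁,M₂,hP, ?_, hpi⟩
          rw [hv, opt (max C₁ (1-C₁)), max_self, max_eq_right hm_le, max_eq_right h2]⟩
  · -- q0high ≤ C₂
    apply csInf_le
    · exact ⟨0, by rintro x ⟨hx, _⟩; exact hx.le⟩
    · refine ⟨by linarith, ?_⟩
      obtain ⟨M₀,M₁,M₂,hP,hv,hpi⟩ := ach4 C₂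
      refine ⟨M₀,M₁,M₂,hP, ?_, hpi⟩
      rw [hv, opt C₂, max_eq_left hm_le, max_self]
      linear_combination (-C₂) * hsum1

/-- If `C₁ < C₂`, `ρ₁₂ = 0` and `q₀⁽⁰⁾ < q < q₀⁽¹⁾`, then every
optimal POVM satisfies `ρ₀^½M₀ρ₀^½ = ρ₁₁|ν₁⟩⟨ν₁|`, `M₁ = 0`,
`ρ₀^½M₂ρ₀^½ = ρ₂₂|ν₂⟩⟨ν₂|`; in particular `P_I(q) = {ρ₁₁}`. -/
theorem stmt13
    (q₁ q₂ : ℝ) (ρ₁ ρ₂ : Matrix (Fin 2) (Fin 2) ℂ)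
    (hq₁ : 0 < q₁) (hq₂ : 0 < q₂) (hq : q₁ + q₂ = 1)
    (hρ₁ : ρ₁.PosSemidef) (htr₁ : ρ₁.trace = 1)
    (hρ₂ : ρ₂.PosSemidef) (htr₂ : ρ₂.trace = 1)
    (hρ0 : (rho0 q₁ q₂ ρ₁ ρ₂).PosDef)
    (S : Matrix (Fin 2) (Fin 2) ℂ) (hS : S.PosSemidef) (hSS : S * S = rho0 q₁ q₂ ρ₁ ρ₂)
    (ν₁ ν₂ : Fin 2 → ℂ)
    (hν₁ : star ν₁ ⬝ᵥ ν₁ = 1) (hν₂ : star ν₂ ⬝ᵥ ν₂ = 1) (hν₁₂ : star ν₁ ⬝ᵥ ν₂ = 0)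
    (C₁ C₂ : ℝ) (hC12 : C₁ ≤ C₂) (hCsum : 1 < C₁ + C₂)
    (hbar₁ : S * ((C₁ : ℂ) • vecMulVec ν₁ (star ν₁)
        + ((1 - C₂ : ℝ) : ℂ) • vecMulVec ν₂ (star ν₂)) * S = (q₁ : ℂ) • ρ₁)
    (hbar₂ : S * (((1 - C₁ : ℝ) : ℂ) • vecMulVec ν₁ (star ν₁)
        + (C₂ : ℂ) • vecMulVec ν₂ (star ν₂)) * S = (q₂ : ℂ) • ρ₂)
    (ρ11 ρ22 : ℝ) (ρ12 : ℂ)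
    (h11 : (ρ11 : ℂ) = star ν₁ ⬝ᵥ (rho0 q₁ q₂ ρ₁ ρ₂ *ᵥ ν₁))
    (h22 : (ρ22 : ℂ) = star ν₂ ⬝ᵥ (rho0 q₁ q₂ ρ₁ ρ₂ *ᵥ ν₂))
    (h12 : ρ12 = star ν₁ ⬝ᵥ (rho0 q₁ q₂ ρ₁ ρ₂ *ᵥ ν₂))
    (hClt : C₁ < C₂) (h12z : ρ12 = 0)
    (q : ℝ) (hql : q0low q₁ q₂ ρ₁ ρ₂ < q) (hqh : q < q0high q₁ q₂ ρ₁ ρ₂) :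
    (∀ M₀ M₁ M₂ : Matrix (Fin 2) (Fin 2) ℂ, IsPOVM M₀ M₁ M₂ →
        PbarCor q q₁ q₂ ρ₁ ρ₂ M₀ M₁ M₂ = PbarOpt q q₁ q₂ ρ₁ ρ₂ →
        S * M₀ * S = (ρ11 : ℂ) • vecMulVec ν₁ (star ν₁) ∧ M₁ = 0 ∧
          S * M₂ * S = (ρ22 : ℂ) • vecMulVec ν₂ (star ν₂)) ∧
      PIset q q₁ q₂ ρ₁ ρ₂ = {ρ11} := by
  have h12z' : star ν₁ ⬝ᵥ (rho0 q₁ q₂ ρ₁ ρ₂ *ᵥ ν₂) = 0 := h12.symm.trans h12z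
  obtain ⟨opt, ach1, hlow, hhigh, hr11, hr22, hsum1⟩ :=
    master q₁ q₂ ρ₁ ρ₂ hq₁ hq₂ hq htr₁ htr₂ hρ0 S hS hSS ν₁ ν₂ hν₁ hν₂ hν₁₂
      C₁ C₂ hC12 hCsum hbar₁ hbar₂ ρ11 ρ22 h11 h22 h12z'
  have hm_lt : max C₁ (1-C₁) < q := lt_of_le_of_lt hlow hql
  have hC2_gt : q < C₂ := lt_of_lt_of_le hqh hhigh
  have hoptq : PbarOpt q q₁ q₂ ρ₁ ρ₂ = q * ρ11 + C₂ * ρ22 := by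
    rw [opt q, max_eq_left hm_lt.le, max_eq_right hC2_gt.le]
  have hone := ortho_complete hν₁ hν₂ hν₁₂
  have hdet := S_det_unit hρ0 hSS
  obtain ⟨p11, p21, p12, p22⟩ := qf_projs hν₁ hν₂ hν₁₂
  have key : ∀ M₀ M₁ M₂ : Matrix (Fin 2) (Fin 2) ℂ, IsPOVM M₀ M₁ M₂ →
      PbarCor q q₁ q₂ ρ₁ ρ₂ M₀ M₁ M₂ = PbarOpt q q₁ q₂ ρ₁ ρ₂ →
      S * M₀ * S = (ρ11 : ℂ) • vecMulVec ν₁ (star ν₁) ∧ M₁ = 0 ∧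
        S * M₂ * S = (ρ22 : ℂ) • vecMulVec ν₂ (star ν₂) := by
    intro M₀ M₁ M₂ hP hopt
    obtain ⟨hM₀, hM₁, hM₂, hMsum⟩ := hP
    have hp₀ := conj_psd hS.1 hM₀
    have hp₁ := conj_psd hS.1 hM₁
    have hp₂ := conj_psd hS.1 hM₂
    have ha₀ := qf_re_nonneg hp₀ ν₁
    have ha₁ := qf_re_nonneg hp₁ ν₁
    have ha₂ := qf_re_nonneg hp₂ ν₁
    have hb₀ := qf_re_nonneg hp₀ ν₂
    have hb₁ := qf_re_nonneg hp₁ ν₂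
    have hb₂ := qf_re_nonneg hp₂ ν₂
    have hsa : (qf ν₁ (S*M₀*S)).re + (qf ν₁ (S*M₁*S)).re + (qf ν₁ (S*M₂*S)).re = ρ11 := by
      have h := congrArg Complex.re (qf_sum_povm q₁ q₂ ρ₁ ρ₂ S hSS hMsum ν₁)
      simpa [Complex.add_re, show qf ν₁ (rho0 q₁ q₂ ρ₁ ρ₂)
        = ((ρ11:ℝ):ℂ) from h11.symm] using h
    have hsb : (qf ν₂ (S*M₀*S)).re + (qf ν₂ (S*M₁*S)).re + (qf ν₂ (S*M₂*S)).re = ρ22 := by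
      have h := congrArg Complex.re (qf_sum_povm q₁ q₂ ρ₁ ρ₂ S hSS hMsum ν₂)
      simpa [Complex.add_re, show qf ν₂ (rho0 q₁ q₂ ρ₁ ρ₂)
        = ((ρ22:ℝ):ℂ) from h22.symm] using h
    rw [hoptq, pbar_formula q q₁ q₂ ρ₁ ρ₂ S ν₁ ν₂ C₁ C₂ hSS hone hbar₁ hbar₂] at hopt
    have c1 : C₁ < q := lt_of_le_of_lt (le_max_left _ _) hm_lt
    have c2 : 1-C₁ < q := lt_of_le_of_lt (le_max_right _ _) hm_lt
    have c4 : 1-C₂ < C₂ := by linarith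
    have e0 : (q-C₁) * (qf ν₁ (S*M₁*S)).re + (q-(1-C₁)) * (qf ν₁ (S*M₂*S)).re
        + (C₂-q) * (qf ν₂ (S*M₀*S)).re + (C₂-(1-C₂)) * (qf ν₂ (S*M₁*S)).re = 0 := by
      linear_combination q * hsa + C₂ * hsb - hopt
    have t1 : 0 ≤ (q-C₁) * (qf ν₁ (S*M₁*S)).re := mul_nonneg (by linarith) ha₁
    have t2 : 0 ≤ (q-(1-C₁)) * (qf ν₁ (S*M₂*S)).re := mul_nonneg (by linarith) ha₂
    have t3 : 0 ≤ (C₂-q) * (qf ν₂ (S*M₀*S)).re := mul_nonneg (by linarith) hb₀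
    have t4 : 0 ≤ (C₂-(1-C₂)) * (qf ν₂ (S*M₁*S)).re := mul_nonneg (by linarith) hb₁
    have zA1 : (qf ν₁ (S*M₁*S)).re = 0 := by
      rcases mul_eq_zero.mp (by linarith : (q-C₁) * (qf ν₁ (S*M₁*S)).re = 0) with h | h
      · exfalso; linarith
      · exact h
    have zA2 : (qf ν₁ (S*M₂*S)).re = 0 := by
      rcases mul_eq_zero.mp (by linarith : (q-(1-C₁)) * (qf ν₁ (S*M₂*S)).re = 0) with h | h
      · exfalso; linarith
      · exact h
    have zB0 : (qf ν₂ (S*M₀*S)).re = 0 := by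
      rcases mul_eq_zero.mp (by linarith : (C₂-q) * (qf ν₂ (S*M₀*S)).re = 0) with h | h
      · exfalso; linarith
      · exact h
    have zB1 : (qf ν₂ (S*M₁*S)).re = 0 := by
      rcases mul_eq_zero.mp (by linarith : (C₂-(1-C₂)) * (qf ν₂ (S*M₁*S)).re = 0) with h | h
      · exfalso; linarith
      · exact h
    have cA1 : qf ν₁ (S*M₁*S) = 0 := by rw [qf_im_zero hp₁ ν₁, zA1]; simp
    have cA2 : qf ν₁ (S*M₂*S) = 0 := by rw [qf_im_zero hp₂ ν₁, zA2]; simp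
    have cB0 : qf ν₂ (S*M₀*S) = 0 := by rw [qf_im_zero hp₀ ν₂, zB0]; simp
    have cB1 : qf ν₂ (S*M₁*S) = 0 := by rw [qf_im_zero hp₁ ν₂, zB1]; simp
    -- M₁ = 0
    have hv1 : (S*M₁*S) *ᵥ ν₁ = 0 := (hp₁.dotProduct_mulVec_zero_iff ν₁).mp cA1
    have hv2 : (S*M₁*S) *ᵥ ν₂ = 0 := (hp₁.dotProduct_mulVec_zero_iff ν₂).mp cB1
    have hN1 : S*M₁*S = 0 := kill_matrix hone hv1 hv2
    have hM1 : M₁ = 0 := by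
      have h := inv_conj hdet M₁
      rw [hN1, Matrix.mul_zero, Matrix.zero_mul] at h
      exact h.symm
    -- M₀
    have hv0 : (S*M₀*S) *ᵥ ν₂ = 0 := (hp₀.dotProduct_mulVec_zero_iff ν₂).mp cB0
    have hw0 : star ν₂ ᵥ* (S*M₀*S) = 0 := by
      calc star ν₂ ᵥ* (S*M₀*S) = star ν₂ ᵥ* (S*M₀*S)ᴴ := by rw [hp₀.1.eq]
        _ = star ((S*M₀*S) *ᵥ ν₂) := (star_mulVec _ _).symm
        _ = 0 := by rw [hv0, star_zero]
    have hred0 := reduce_matrix hone hv0 hw0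
    have hcoef0 : qf ν₁ (S*M₀*S) = ((ρ11:ℝ):ℂ) := by
      have hsum := qf_sum_povm q₁ q₂ ρ₁ ρ₂ S hSS hMsum ν₁
      rw [cA1, cA2, add_zero, add_zero] at hsum
      exact hsum.trans h11.symm
    -- M₂
    have hv2' : (S*M₂*S) *ᵥ ν₁ = 0 := (hp₂.dotProduct_mulVec_zero_iff ν₁).mp cA2
    have hw2' : star ν₁ ᵥ* (S*M₂*S) = 0 := by
      calc star ν₁ ᵥ* (S*M₂*S) = star ν₁ ᵥ* (S*M₂*S)ᴴ := by rw [hp₂.1.eq]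
        _ = star ((S*M₂*S) *ᵥ ν₁) := (star_mulVec _ _).symm
        _ = 0 := by rw [hv2', star_zero]
    have hone' : vecMulVec ν₂ (star ν₂) + vecMulVec ν₁ (star ν₁) = 1 := by
      rw [add_comm]; exact hone
    have hred2 := reduce_matrix hone' hv2' hw2'
    have hcoef2 : qf ν₂ (S*M₂*S) = ((ρ22:ℝ):ℂ) := by
      have hsum := qf_sum_povm q₁ q₂ ρ₁ ρ₂ S hSS hMsum ν₂
      rw [cB0, cB1, zero_add, zero_add] at hsum
      exact hsum.trans h22.symm
    refine ⟨?_, hM1, ?_⟩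
    · rw [hred0, show (star ν₁ ⬝ᵥ ((S*M₀*S) *ᵥ ν₁)) = ((ρ11:ℝ):ℂ) from hcoef0]
    · rw [hred2, show (star ν₂ ⬝ᵥ ((S*M₂*S) *ᵥ ν₂)) = ((ρ22:ℝ):ℂ) from hcoef2]
  refine ⟨key, ?_⟩
  ext Q
  simp only [PIset, Set.mem_setOf_eq, Set.mem_singleton_iff]
  constructor
  · rintro ⟨M₀, M₁, M₂, hP, hopt, hpi⟩
    obtain ⟨h₀, h₁, h₂⟩ := key M₀ M₁ M₂ hP hopt
    rw [← hpi, PIof_formula q₁ q₂ ρ₁ ρ₂ S ν₁ ν₂ hSS hone, h₀, qf_smul, qf_smul, p11, p21]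
    simp
  · rintro rfl
    obtain ⟨M₀, M₁, M₂, hP, hv, hpi⟩ := ach1 q
    exact ⟨M₀, M₁, M₂, hP, by rw [hv, hoptq], hpi⟩


end FRIR
end
end
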